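/- arXiv:2105.02561 — 7 statements merged into one kernel-verified Lean document; each statement's English description precedes it below -/
import Mathlib

section
/- Let T be a triangulated category with a t-structure and let f : A → B be a morphism in T with A ∈ T_{≤0}. Then f factors as f = f̃ ∘ p, where p : A → Coim(f) is a t-epimorphism with Coim(f) ∈ T_{≤0}, and f̃ : Coim(f) → B is a t-monomorphism. More precisely, if F is defined by a distinguished triangle F → A → B, then Coim(f) sits in a distinguished triangle τ_{≤0}F → A → Coim(f) (where the first map is the composite τ_{≤0}F → F → A), and there is a morphism of distinguished triangles from (τ_{≤0}F → A → Coim(f)) to (F → A → B) which is the natural map τ_{≤0}F → F on the first term, the identity of A on the second, and f̃ on the third. -/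
open CategoryTheory Limits Pretriangulated Triangulated Opposite

namespace DGP

universe v u

variable {C : Type u} [Category.{v} C] [Preadditive C] [HasZeroObject C] [HasShift C ℤ]
  [∀ n : ℤ, (shiftFunctor C n).Additive] [Pretriangulated C]

/-- A morphism `f : A ⟶ B` is a t-monomorphism if its cone lies in `T_{≥0}`. -/
def IsTMono (t : TStructure C) {A B : C} (f : A ⟶ B) : Prop :=
  ∃ (Z : C) (g : B ⟶ Z) (h : Z ⟶ A⟦(1 : ℤ)⟧),
    Triangle.mk f g h ∈ (distTriang C) ∧ t.ge 0 Z

/-- A morphism `f : A ⟶ B` is a t-epimorphism if `cone(f)[-1]` lies in `T_{≤0}`,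
equivalently it fits in a distinguished triangle `Z ⟶ A ⟶ B` with `Z ∈ T_{≤0}`. -/
def IsTEpi (t : TStructure C) {A B : C} (f : A ⟶ B) : Prop :=
  ∃ (Z : C) (g : Z ⟶ A) (h : B ⟶ Z⟦(1 : ℤ)⟧),
    Triangle.mk g f h ∈ (distTriang C) ∧ t.le 0 Z

/-- The heart of a t-structure, as a full subcategory. -/
abbrev Heart (t : TStructure C) := ObjectProperty.FullSubcategory (fun X => t.le 0 X ∧ t.ge 0 X)

/-- The inclusion of the heart. -/
abbrev heartι (t : TStructure C) : Heart t ⥤ C := ObjectProperty.ι _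

/-- Truncation data for a t-structure: truncation functors `τ≤n`, `τ≥n` together with
their universal properties and the truncation distinguished triangles. -/
structure TruncData (t : TStructure C) where
  τle : ℤ → C ⥤ C
  τge : ℤ → C ⥤ C
  τleLE : ∀ (n : ℤ) (X : C), t.le n ((τle n).obj X)
  τgeGE : ∀ (n : ℤ) (X : C), t.ge n ((τge n).obj X)
  ι : ∀ n : ℤ, τle n ⟶ 𝟭 C
  π : ∀ n : ℤ, 𝟭 C ⟶ τge n
  le_univ : ∀ (n : ℤ) (X Y : C), t.le n X →
    Function.Bijective (fun (f : X ⟶ (τle n).obj Y) => f ≫ (ι n).app Y)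
  ge_univ : ∀ (n : ℤ) (X Y : C), t.ge n Y →
    Function.Bijective (fun (f : (τge n).obj X ⟶ Y) => (π n).app X ≫ f)
  δ : ∀ (n : ℤ) (X : C), (τge (n + 1)).obj X ⟶ ((τle n).obj X)⟦(1 : ℤ)⟧
  tri : ∀ (n : ℤ) (X : C),
    Triangle.mk ((ι n).app X) ((π (n + 1)).app X) (δ n X) ∈ distTriang C
  τge_LE : ∀ (n m : ℤ) (X : C), t.le m X → t.le m ((τge n).obj X)

variable {t : TStructure C}

/-- The cohomological functor `H^0 = τ≥0 τ≤0 : C ⥤ Heart t`. -/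
def H0 (d : TruncData t) : C ⥤ Heart t :=
  ObjectProperty.lift _ (d.τle 0 ⋙ d.τge 0)
    (fun X => ⟨d.τge_LE 0 0 _ (d.τleLE 0 X), d.τgeGE 0 _⟩)

/-- The cohomology functors `H^n(X) = H^0(X⟦n⟧)`. -/
def Hn (d : TruncData t) (n : ℤ) : C ⥤ Heart t :=
  shiftFunctor C n ⋙ H0 d

/-- An object `E` is a derived injective if there is an injective object `I` of the heart
and a natural isomorphism `T(−, E) ≅ T^♥(H^0(−), I)`. -/
def IsDerivedInjective (d : TruncData t) (E : C) : Prop :=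
  ∃ I : Heart t, Injective I ∧ Nonempty (yoneda.obj E ≅ (H0 d).op ⋙ yoneda.obj I)

/-- The t-structure is non-degenerate if objects with vanishing cohomologies are zero. -/
def NonDegenerate (d : TruncData t) : Prop :=
  ∀ X : C, (∀ n : ℤ, IsZero ((Hn d n).obj X)) → IsZero X

end DGP

open DGP

section AuxLemmas

variable {C : Type*} [Category C] [Preadditive C] [HasZeroObject C] [HasShift C ℤ]
  [∀ n : ℤ, (shiftFunctor C n).Additive] [Pretriangulated C]

lemma aux_zero (t : TStructure C) {X Y : C} (f : X ⟶ Y) {n m : ℤ} (h : n < m)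
    (hX : t.le n X) (hY : t.ge m Y) : f = 0 := by
  apply (shiftFunctor C n).map_injective
  rw [Functor.map_zero]
  exact t.zero' _ (t.le_shift n n 0 (by omega) X hX)
    (t.ge_antitone (show (1:ℤ) ≤ m - n by omega) _ (t.ge_shift m n (m - n) (by omega) Y hY))

/-- If every map from an object of `T_{≤ -1}` to `Z` vanishes, then `Z ∈ T_{≥ 0}`. -/
lemma aux_ge {t : TStructure C} (d : TruncData t) (Z : C)
    (h : ∀ (X : C), t.le (-1) X → ∀ (φ : X ⟶ Z), φ = 0) : t.ge 0 Z := by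
  have key : ∀ (m : ℤ) (_ : (-1 : ℤ) + 1 = m), ∃ δ : (d.τge m).obj Z ⟶ ((d.τle (-1)).obj Z)⟦(1:ℤ)⟧,
      Triangle.mk ((d.ι (-1)).app Z) ((d.π m).app Z) δ ∈ distTriang C := by
    rintro m rfl; exact ⟨_, d.tri (-1) Z⟩
  obtain ⟨δ, htri⟩ := key 0 (by norm_num)
  have hz : (d.ι (-1)).app Z = 0 := h _ (d.τleLE (-1) Z) _
  obtain ⟨r, hr⟩ : ∃ r : (d.τge 0).obj Z ⟶ Z, 𝟙 Z = (d.π 0).app Z ≫ r :=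
    Triangle.yoneda_exact₂ _ htri (𝟙 Z)
    (by change (d.ι (-1)).app Z ≫ 𝟙 Z = 0; rw [hz, zero_comp])
  change 𝟙 Z = (d.π 0).app Z ≫ r at hr
  have hri : r ≫ (d.π 0).app Z = 𝟙 _ :=
    (d.ge_univ 0 Z ((d.τge 0).obj Z) (d.τgeGE 0 Z)).1
      (show (d.π 0).app Z ≫ r ≫ (d.π 0).app Z
          = (d.π 0).app Z ≫ 𝟙 _ by
        rw [← Category.assoc, ← hr]; simp)
  have : IsIso ((d.π 0).app Z) := ⟨r, hr.symm, hri⟩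
  exact (t.ge 0).prop_of_iso (asIso ((d.π 0).app Z)).symm (d.τgeGE 0 Z)

/-- If every map from `Z` to an object of `T_{≥ 1}` vanishes, then `Z ∈ T_{≤ 0}`. -/
lemma aux_le {t : TStructure C} (d : TruncData t) (Z : C)
    (h : ∀ (W : C), t.ge 1 W → ∀ (φ : Z ⟶ W), φ = 0) : t.le 0 Z := by
  have htri := d.tri 0 Z
  change Triangle.mk ((d.ι 0).app Z) ((d.π 1).app Z) (d.δ 0 Z) ∈ distTriang C at htri
  have hz : (d.π 1).app Z = 0 := h _ (d.τgeGE 1 Z) _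
  obtain ⟨s, hs⟩ : ∃ s : Z ⟶ (d.τle 0).obj Z, 𝟙 Z = s ≫ (d.ι 0).app Z :=
    Triangle.coyoneda_exact₂ _ htri (𝟙 Z)
    (by change 𝟙 Z ≫ (d.π 1).app Z = 0; rw [hz, comp_zero])
  change 𝟙 Z = s ≫ (d.ι 0).app Z at hs
  have his : (d.ι 0).app Z ≫ s = 𝟙 _ :=
    (d.le_univ 0 ((d.τle 0).obj Z) Z (d.τleLE 0 Z)).1
      (show ((d.ι 0).app Z ≫ s) ≫ (d.ι 0).app Z = 𝟙 _ ≫ (d.ι 0).app Z by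
        rw [Category.assoc, ← hs]; simp)
  have : IsIso ((d.ι 0).app Z) := ⟨s, his, hs.symm⟩
  exact (t.le 0).prop_of_iso (asIso ((d.ι 0).app Z)) (d.τleLE 0 Z)

end AuxLemmas

/-- The t-epi/t-mono factorization: given `f : A ⟶ B` with `A ∈ T_{≤0}` and a distinguished
triangle `K ⟶ A ⟶ B`, there are a distinguished triangle `τ≤0 K ⟶ A ⟶ Coim f` (whose first
map is the composite `τ≤0 K ⟶ K ⟶ A`), with `Coim f ∈ T_{≤0}`, a t-epimorphism
`p : A ⟶ Coim f`, a t-monomorphism `f̃ : Coim f ⟶ B` with `p ≫ f̃ = f`, and a morphism of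
distinguished triangles from `(τ≤0 K ⟶ A ⟶ Coim f)` to `(K ⟶ A ⟶ B)` given by the natural
map `τ≤0 K ⟶ K` on the first vertex, the identity of `A` on the second, and `f̃` on the
third. -/
theorem stmt4 {C : Type*} [Category C]
    [Preadditive C] [HasZeroObject C] [HasShift C ℤ] [∀ n : ℤ, (shiftFunctor C n).Additive]
    [Pretriangulated C]
    (t : TStructure C) (d : TruncData t) {A B : C} (f : A ⟶ B) (hA : t.le 0 A)
    (K : C) (k : K ⟶ A) (b : B ⟶ K⟦(1 : ℤ)⟧)
    (hK : Triangle.mk k f b ∈ distTriang C) :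
    ∃ (Coim : C) (p : A ⟶ Coim) (ft : Coim ⟶ B)
      (δ' : Coim ⟶ ((d.τle 0).obj K)⟦(1 : ℤ)⟧),
      Triangle.mk ((d.ι 0).app K ≫ k) p δ' ∈ (distTriang C) ∧
      t.le 0 Coim ∧ IsTEpi t p ∧ IsTMono t ft ∧ p ≫ ft = f ∧
      ∃ φ : Triangle.mk ((d.ι 0).app K ≫ k) p δ' ⟶ Triangle.mk k f b,
        φ.hom₁ = (d.ι 0).app K ∧ φ.hom₂ = 𝟙 A ∧ φ.hom₃ = ft := by
  obtain ⟨Coim, p, δ', hT'⟩ := distinguished_cocone_triangle ((d.ι 0).app K ≫ k)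
  obtain ⟨ft, hft₁, hft₂⟩ :
      ∃ ft : Coim ⟶ B, p ≫ ft = 𝟙 A ≫ f ∧
        δ' ≫ ((d.ι 0).app K)⟦(1:ℤ)⟧' = ft ≫ b :=
    complete_distinguished_triangle_morphism
      (Triangle.mk ((d.ι 0).app K ≫ k) p δ') (Triangle.mk k f b) hT' hK
      ((d.ι 0).app K) (𝟙 A) (by exact Category.comp_id _)
  rw [Category.id_comp] at hft₁
  -- hft₁ : p ≫ ft = f ; hft₂ : δ' ≫ ((d.ι 0).app K)⟦1⟧' = ft ≫ b
  have hLE : t.le 0 Coim := by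
    apply aux_le d
    intro W hW φ
    obtain ⟨ψ, hψ⟩ : ∃ ψ : ((d.τle 0).obj K)⟦(1:ℤ)⟧ ⟶ W, φ = δ' ≫ ψ :=
      Triangle.yoneda_exact₃ _ hT' φ
        (by dsimp; exact aux_zero t _ (show (0:ℤ) < 1 by omega) hA hW)
    rw [hψ, aux_zero t ψ (show (-1:ℤ) < 1 by omega)
      (t.le_shift 0 1 (-1) (by omega) _ (d.τleLE 0 K)) hW, comp_zero]
  obtain ⟨Z, u, v, hZ⟩ := distinguished_cocone_triangle ft
  have hftu : ft ≫ u = 0 := comp_distTriang_mor_zero₁₂ _ hZ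
  have hfu : f ≫ u = 0 := by rw [← hft₁, Category.assoc, hftu, comp_zero]
  have hvf : v ≫ ft⟦(1:ℤ)⟧' = 0 := comp_distTriang_mor_zero₃₁ _ hZ
  have hbk : b ≫ k⟦(1:ℤ)⟧' = 0 := comp_distTriang_mor_zero₃₁ _ hK
  have hgp : ((d.ι 0).app K ≫ k) ≫ p = 0 := comp_distTriang_mor_zero₁₂ _ hT'
  have hTQ : Triangle.mk ((d.ι 0).app K) ((d.π 1).app K) (d.δ 0 K) ∈ distTriang C := by
    have h := d.tri 0 K
    exact h
  have hTQ1 := rot_of_distTriang _ (rot_of_distTriang _ (rot_of_distTriang _ hTQ))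
  have hGE : t.ge 0 Z := by
    apply aux_ge d
    intro X hX φ
    have hQ1 : ∀ (g : X ⟶ ((d.τge 1).obj K)⟦(1:ℤ)⟧), g = 0 := fun g =>
      aux_zero t g (show (-1:ℤ) < 0 by omega) hX
        (t.ge_shift 1 1 0 (by omega) _ (d.τgeGE 1 K))
    -- Step 1 : (φ ≫ v) ≫ ft⟦1⟧' = 0
    have h1 : (φ ≫ v) ≫ ft⟦(1:ℤ)⟧' = 0 := by
      rw [Category.assoc, hvf, comp_zero]
    -- Step 2 : (φ ≫ v) ≫ δ'⟦1⟧' = 0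
    have h2 : (φ ≫ v) ≫ δ'⟦(1:ℤ)⟧' = 0 := by
      have hc : ((φ ≫ v) ≫ δ'⟦(1:ℤ)⟧') ≫ (((d.ι 0).app K)⟦(1:ℤ)⟧')⟦(1:ℤ)⟧' = 0 := by
        rw [Category.assoc, ← Functor.map_comp, hft₂, Functor.map_comp, ← Category.assoc,
          h1, zero_comp]
      obtain ⟨gq, hgq⟩ : ∃ gq : X ⟶ ((d.τge 1).obj K)⟦(1:ℤ)⟧,
          (φ ≫ v) ≫ δ'⟦(1:ℤ)⟧' = gq ≫ (-(d.δ 0 K)⟦(1:ℤ)⟧') :=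
        Triangle.coyoneda_exact₁ _ hTQ1 ((φ ≫ v) ≫ δ'⟦(1:ℤ)⟧')
          (by change ((φ ≫ v) ≫ δ'⟦(1:ℤ)⟧') ≫ (-((d.ι 0).app K)⟦(1:ℤ)⟧')⟦(1:ℤ)⟧' = 0
              rw [Functor.map_neg, Preadditive.comp_neg, neg_eq_zero]; exact hc)
      rw [hgq, hQ1 gq, zero_comp]
    -- Step 3 : φ ≫ v factors through p⟦1⟧'
    obtain ⟨α', hα'⟩ : ∃ α' : X ⟶ A⟦(1:ℤ)⟧, φ ≫ v = α' ≫ (-p⟦(1:ℤ)⟧') :=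
      Triangle.coyoneda_exact₁ _
        (rot_of_distTriang _ (rot_of_distTriang _ hT')) (φ ≫ v)
        (by dsimp [Triangle.rotate]; exact h2)
    have hα : (-α') ≫ p⟦(1:ℤ)⟧' = φ ≫ v := by
      rw [hα', Preadditive.comp_neg, Preadditive.neg_comp]
    -- Step 4 : (-α') ≫ f⟦1⟧' = 0
    have h4 : (-α') ≫ f⟦(1:ℤ)⟧' = 0 := by
      rw [← hft₁, Functor.map_comp, ← Category.assoc, hα, h1]
    -- Step 5 : -α' factors through k⟦1⟧'
    obtain ⟨γ, hγ⟩ : ∃ γ : X ⟶ K⟦(1:ℤ)⟧, -α' = γ ≫ (-k⟦(1:ℤ)⟧') :=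
      Triangle.coyoneda_exact₁ _ (rot_of_distTriang _ hK) (-α')
        (by dsimp [Triangle.rotate]; exact h4)
    -- Step 6 : γ factors through ι⟦1⟧'
    obtain ⟨ε, hε⟩ : ∃ ε : X ⟶ ((d.τle 0).obj K)⟦(1:ℤ)⟧,
        γ = ε ≫ (-((d.ι 0).app K)⟦(1:ℤ)⟧') :=
      Triangle.coyoneda_exact₂ _ hTQ1 γ
        (by change γ ≫ (-((d.π 1).app K)⟦(1:ℤ)⟧') = 0; rw [Preadditive.comp_neg, neg_eq_zero]; exact hQ1 _)
    -- Step 7 : φ ≫ v = 0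
    have h7 : φ ≫ v = 0 := by
      have : (-α') ≫ p⟦(1:ℤ)⟧' = 0 := by
        rw [hγ, hε]
        simp only [Preadditive.neg_comp, Preadditive.comp_neg, neg_neg, Category.assoc,
          ← Functor.map_comp]
        rw [show (d.ι 0).app K ≫ k ≫ p = 0 by rw [← Category.assoc]; exact hgp,
          Functor.map_zero, comp_zero]
      rw [← hα, this]
    -- Step 8 : φ factors through u
    obtain ⟨β', hβ'⟩ : ∃ β' : X ⟶ B, φ = β' ≫ u := Triangle.coyoneda_exact₃ _ hZ φ h7
    -- Step 9 : β' ≫ b factors through ι⟦1⟧'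
    obtain ⟨ε₂, hε₂⟩ : ∃ ε₂ : X ⟶ ((d.τle 0).obj K)⟦(1:ℤ)⟧,
        β' ≫ b = ε₂ ≫ (-((d.ι 0).app K)⟦(1:ℤ)⟧') :=
      Triangle.coyoneda_exact₂ _ hTQ1 (β' ≫ b)
        (by change (β' ≫ b) ≫ (-((d.π 1).app K)⟦(1:ℤ)⟧') = 0; rw [Preadditive.comp_neg, neg_eq_zero]; exact hQ1 _)
    have hε₂' : (-ε₂) ≫ ((d.ι 0).app K)⟦(1:ℤ)⟧' = β' ≫ b := by
      rw [hε₂, Preadditive.comp_neg, Preadditive.neg_comp]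
    -- Step 10 : (-ε₂) ≫ (ι ≫ k)⟦1⟧' = 0
    have h10 : (-ε₂) ≫ ((d.ι 0).app K ≫ k)⟦(1:ℤ)⟧' = 0 := by
      rw [Functor.map_comp, ← Category.assoc, hε₂', Category.assoc, hbk, comp_zero]
    -- Step 11 : -ε₂ factors through δ'
    obtain ⟨σ, hσ⟩ : ∃ σ : X ⟶ Coim, -ε₂ = σ ≫ δ' :=
      Triangle.coyoneda_exact₁ _ hT' (-ε₂) (by dsimp; exact h10)
    -- Step 12 : (β' - σ ≫ ft) ≫ b = 0
    have h12 : (β' - σ ≫ ft) ≫ b = 0 := by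
      rw [Preadditive.sub_comp, ← hε₂', hσ, Category.assoc, Category.assoc, hft₂, sub_self]
    -- Step 13 : β' - σ ≫ ft factors through f
    obtain ⟨ρ, hρ⟩ : ∃ ρ : X ⟶ A, β' - σ ≫ ft = ρ ≫ f :=
      Triangle.coyoneda_exact₃ _ hK (β' - σ ≫ ft : X ⟶ B) h12
    -- Step 14 : φ = 0
    have hβeq : β' = ρ ≫ f + σ ≫ ft := by rw [← hρ]; abel
    rw [hβ', hβeq, Preadditive.add_comp, Category.assoc, Category.assoc, hfu, hftu,
      comp_zero, comp_zero, add_zero]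
  refine ⟨Coim, p, ft, δ', hT', hLE,
    ⟨(d.τle 0).obj K, (d.ι 0).app K ≫ k, δ', hT', d.τleLE 0 K⟩,
    ⟨Z, u, v, hZ, hGE⟩, hft₁, ?_⟩
  exact ⟨Triangle.homMk _ _ ((d.ι 0).app K) (𝟙 A) ft
    (by exact Category.comp_id _)
    (by exact hft₁.trans (Category.id_comp f).symm)
    (by dsimp; exact hft₂), rfl, rfl, rfl⟩
end

section
/- Let T be a triangulated category with a t-structure, let I be an injective object of the heart T^♥, and suppose the derived injective L(I) associated to I exists, i.e. there is an isomorphism of functors T(−, L(I)) ≅ T^♥(H^0(−), I) on T^op. Then: (1) L(I) ∈ T_{≥0}; (2) H^0(L(I)) ≅ I; and (3) for every A ∈ T, the map induced by H^0, namely T(A, L(I)) → T^♥(H^0(A), H^0(L(I))) ≅ T^♥(H^0(A), I), is an isomorphism. -/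
open CategoryTheory Limits Pretriangulated Triangulated Opposite

open DGP

namespace DGPAux

open CategoryTheory Limits Pretriangulated Triangulated Opposite Category

variable {C : Type*} [Category C] [Preadditive C] [HasZeroObject C] [HasShift C ℤ]
  [∀ n : ℤ, (shiftFunctor C n).Additive] [Pretriangulated C]

/-- Orthogonality for arbitrary indices. -/
lemma tzero (t : TStructure C) {X Y : C} (f : X ⟶ Y) (a b : ℤ) (h : a < b)
    (hX : t.le a X) (hY : t.ge b Y) : f = 0 := by
  have h1 : t.le 0 (X⟦a⟧) := t.le_shift a a 0 (by omega) X hX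
  have h2 : t.ge (b - a) (Y⟦a⟧) := t.ge_shift b a (b - a) (by omega) Y hY
  have h2' : t.ge 1 (Y⟦a⟧) := t.ge_antitone (by omega : (1:ℤ) ≤ b - a) _ h2
  have hz : (shiftFunctor C a).map f = 0 := t.zero' _ h1 h2'
  apply (shiftFunctor C a).map_injective
  rw [hz, Functor.map_zero]

/-- If a map into the first object of a distinguished triangle composes to zero with the
first morphism and all maps to `obj₃⟦-1⟧` vanish, then the map is zero. -/
lemma factor_vanish {T : Triangle C} (hT : T ∈ distTriang C) {X : C}
    (f : X ⟶ T.obj₁) (hf : f ≫ T.mor₁ = 0)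
    (hv : ∀ g : X ⟶ T.obj₃⟦(-1:ℤ)⟧, g = 0) : f = 0 := by
  obtain ⟨g, hg⟩ := Triangle.coyoneda_exact₂ _ (inv_rot_of_distTriang _ hT) f hf
  rw [hg, hv g]
  exact Limits.zero_comp

variable {t : TStructure C}

/-- An object receiving no nonzero maps from `T_{≤ -1}` lies in `T_{≥ 0}`. -/
lemma ge_of_orth (d : TruncData t) (Y : C)
    (h : ∀ (X : C), t.le (-1) X → ∀ f : X ⟶ Y, f = 0) : t.ge 0 Y := by
  have hT := d.tri (-1) Y
  have ha : (d.ι (-1)).app Y = 0 := h _ (d.τleLE (-1) Y) _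
  have hX : IsZero ((d.τle (-1)).obj Y) := by
    rw [IsZero.iff_id_eq_zero]
    exact factor_vanish hT (𝟙 _) (by rw [Category.id_comp]; exact ha)
      (fun g => tzero t g (-1) 1 (by omega) (d.τleLE (-1) Y)
        (t.ge_shift (-1 + 1) (-1) 1 (by omega) _ (d.τgeGE (-1 + 1) Y)))
  have : IsIso ((d.π (-1 + 1)).app Y) := (Triangle.isZero₁_iff_isIso₂ _ hT).1 hX
  exact ((t.ge 0).prop_iff_of_iso (asIso ((d.π (-1 + 1)).app Y))).2
    (t.ge_antitone (by omega : (0 : ℤ) ≤ -1 + 1) _ (d.τgeGE (-1 + 1) Y))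

/-- `ι` is an isomorphism on objects of `T_{≤0}`. -/
lemma iota_isIso (d : TruncData t) (X : C) (hX : t.le 0 X) :
    IsIso ((d.ι 0).app X) := by
  obtain ⟨s, hs⟩ := (d.le_univ 0 X X hX).2 (𝟙 X)
  have hs' : s ≫ (d.ι 0).app X = 𝟙 X := hs
  refine ⟨⟨s, ?_, hs'⟩⟩
  apply (d.le_univ 0 ((d.τle 0).obj X) X (d.τleLE 0 X)).1
  show ((d.ι 0).app X ≫ s) ≫ (d.ι 0).app X = 𝟙 _ ≫ (d.ι 0).app X
  rw [Category.assoc, hs']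
  simp

/-- `π` is an isomorphism on objects of `T_{≥0}`. -/
lemma pi_isIso (d : TruncData t) (W : C) (hW : t.ge 0 W) :
    IsIso ((d.π 0).app W) := by
  obtain ⟨r, hr⟩ := (d.ge_univ 0 W W hW).2 (𝟙 W)
  have hr' : (d.π 0).app W ≫ r = 𝟙 W := hr
  refine ⟨⟨r, hr', ?_⟩⟩
  apply (d.ge_univ 0 W ((d.τge 0).obj W) (d.τgeGE 0 W)).1
  show (d.π 0).app W ≫ (r ≫ (d.π 0).app W) = (d.π 0).app W ≫ 𝟙 _
  rw [← Category.assoc, hr']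
  simp

/-- `τ≤0` preserves `T_{≥0}`. -/
lemma tle_ge (d : TruncData t) (W : C) (hW : t.ge 0 W) :
    t.ge 0 ((d.τle 0).obj W) := by
  apply ge_of_orth d
  intro X hX f
  have hT := d.tri 0 W
  have hf : f ≫ (d.ι 0).app W = 0 := tzero t _ (-1) 0 (by omega) hX hW
  exact factor_vanish hT f hf
    (fun g => tzero t g (-1) 2 (by omega) hX
      (t.ge_shift (0 + 1) (-1) 2 (by omega) _ (d.τgeGE (0 + 1) W)))

/-- For `K ∈ T_{≤0}`, composition with `ι : τ≤0 W ⟶ W` is bijective. -/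
lemma iota_bij (d : TruncData t) (K W : C) (hK : t.le 0 K) :
    Function.Bijective (fun f : K ⟶ (d.τle 0).obj W => f ≫ (d.ι 0).app W) := by
  have hT := d.tri 0 W
  constructor
  · intro f₁ f₂ h
    have h' : f₁ ≫ (d.ι 0).app W = f₂ ≫ (d.ι 0).app W := h
    have hsub : (f₁ - f₂) ≫ (d.ι 0).app W = 0 := by
      rw [Preadditive.sub_comp, h', sub_self]
    have h0 : f₁ - f₂ = 0 := factor_vanish hT (f₁ - f₂) hsub
      (fun g => tzero t g 0 2 (by omega) hK
        (t.ge_shift (0 + 1) (-1) 2 (by omega) _ (d.τgeGE (0 + 1) W)))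
    exact sub_eq_zero.1 h0
  · intro f
    have hf : f ≫ (d.π (0 + 1)).app W = 0 :=
      tzero t _ 0 (0 + 1) (by omega) hK (d.τgeGE (0 + 1) W)
    obtain ⟨g, hg⟩ := Triangle.coyoneda_exact₂ _ hT f hf
    exact ⟨g, hg.symm⟩

lemma precomp_bij {D : Type*} [Category D] {X Y Z : D} (h : X ⟶ Y) [IsIso h] :
    Function.Bijective (fun f : Y ⟶ Z => h ≫ f) :=
  ⟨fun a b hab => by simpa using congrArg (fun q => inv h ≫ q) hab,
   fun c => ⟨inv h ≫ c, by simp⟩⟩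

lemma postcomp_bij {D : Type*} [Category D] {X Y Z : D} (h : Y ⟶ Z) [IsIso h] :
    Function.Bijective (fun f : X ⟶ Y => f ≫ h) :=
  ⟨fun a b hab => by simpa using congrArg (fun q => q ≫ inv h) hab,
   fun c => ⟨c ≫ inv h, by simp⟩⟩

/-- Post-composition with the universal map `u : H⁰(L) ⟶ I` is bijective on the heart. -/
lemma post_u_bij (d : TruncData t) (I : Heart t) (L : C)
    (φ : ∀ A : C, (A ⟶ L) ≃ ((H0 d).obj A ⟶ I))
    (u : (H0 d).obj L ⟶ I)
    (hnat : ∀ (A : C) (f : A ⟶ L), φ A f = (H0 d).map f ≫ u)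
    (hGE : t.ge 0 L) (K : Heart t) :
    Function.Bijective (fun g : K ⟶ (H0 d).obj L => g ≫ u) := by
  have hKle : t.le 0 K.obj := K.property.1
  have hPge : t.ge 0 ((d.τle 0).obj L) := tle_ge d L hGE
  haveI hπP : IsIso ((d.π 0).app ((d.τle 0).obj L)) := pi_isIso d _ hPge
  haveI hιK : IsIso ((d.ι 0).app K.obj) := iota_isIso d K.obj hKle
  have hFKge : t.ge 0 ((d.τle 0).obj K.obj) :=
    ((t.ge 0).prop_iff_of_iso (asIso ((d.ι 0).app K.obj))).2 K.property.2
  haveI hπK : IsIso ((d.π 0).app ((d.τle 0).obj K.obj)) := pi_isIso d _ hFKge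
  have hγ0 : IsIso (inv ((d.ι 0).app K.obj) ≫ (d.π 0).app ((d.τle 0).obj K.obj)) := inferInstance
  haveI hγ' : IsIso (inv ((d.ι 0).app K.obj) ≫ (d.π 0).app ((d.τle 0).obj K.obj) :
    K.obj ⟶ ((H0 d).obj K.obj).obj) := hγ0
  -- the comparison map `γ : K ≅ H⁰(K)` in the heart
  let γ : (K ⟶ (H0 d).obj K.obj) := ObjectProperty.homMk
    (inv ((d.ι 0).app K.obj) ≫ (d.π 0).app ((d.τle 0).obj K.obj) :
      K.obj ⟶ (d.τge 0).obj ((d.τle 0).obj K.obj))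
  have hγ : IsIso γ := by
    refine ⟨⟨ObjectProperty.homMk (inv (inv ((d.ι 0).app K.obj) ≫ (d.π 0).app ((d.τle 0).obj K.obj)) :
      ((H0 d).obj K.obj).obj ⟶ K.obj), ?_, ?_⟩⟩
    · exact ObjectProperty.hom_ext _ <| IsIso.hom_inv_id
        (f := inv ((d.ι 0).app K.obj) ≫ (d.π 0).app ((d.τle 0).obj K.obj))
    · exact ObjectProperty.hom_ext _ <| IsIso.inv_hom_id
        (f := inv ((d.ι 0).app K.obj) ≫ (d.π 0).app ((d.τle 0).obj K.obj))
  -- the map B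
  let B : (K ⟶ (H0 d).obj L) → (K.obj ⟶ L) := fun g =>
    (((g.hom : K.obj ⟶ (d.τge 0).obj ((d.τle 0).obj L)) ≫ inv (I := hπP) ((d.π 0).app ((d.τle 0).obj L)) :
      K.obj ⟶ (d.τle 0).obj L)) ≫ (d.ι 0).app L
  have hBbij : Function.Bijective B := by
    have h1 : Function.Bijective (fun g : K ⟶ (H0 d).obj L =>
        ((g.hom : K.obj ⟶ (d.τge 0).obj ((d.τle 0).obj L)) ≫ inv (I := hπP) ((d.π 0).app ((d.τle 0).obj L)) :
          K.obj ⟶ (d.τle 0).obj L)) :=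
      (postcomp_bij (inv (I := hπP) ((d.π 0).app ((d.τle 0).obj L)))).comp
        (⟨fun a b h => ObjectProperty.hom_ext _ h, fun c => ⟨ObjectProperty.homMk c, rfl⟩⟩ :
          Function.Bijective (fun g : K ⟶ (H0 d).obj L => g.hom))
    exact (iota_bij d K.obj L hKle).comp h1
  have key : ∀ g : K ⟶ (H0 d).obj L, g ≫ u = γ ≫ φ K.obj (B g) := by
    intro g
    rw [hnat K.obj (B g), ← Category.assoc]
    congr 1
    -- goal : g = γ ≫ (H0 d).map (B g) in the heart
    have hπnat : (d.π 0).app ((d.τle 0).obj K.obj) ≫ (d.τge 0).map ((d.τle 0).map (B g))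
        = (d.τle 0).map (B g) ≫ (d.π 0).app ((d.τle 0).obj L) := by
      simpa using ((d.π 0).naturality ((d.τle 0).map (B g))).symm
    have hιnat : (d.τle 0).map (B g) ≫ (d.ι 0).app L = (d.ι 0).app K.obj ≫ B g := by
      simpa using (d.ι 0).naturality (B g)
    have hFm : inv ((d.ι 0).app K.obj) ≫ (d.τle 0).map (B g)
        = ((g.hom : K.obj ⟶ (d.τge 0).obj ((d.τle 0).obj L)) ≫
            inv (I := hπP) ((d.π 0).app ((d.τle 0).obj L)) : K.obj ⟶ (d.τle 0).obj L) := by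
      apply (iota_bij d K.obj L hKle).1
      dsimp only
      rw [Category.assoc, hιnat, IsIso.inv_hom_id_assoc]
    have hC : (inv ((d.ι 0).app K.obj) ≫ (d.π 0).app ((d.τle 0).obj K.obj)) ≫
        (d.τge 0).map ((d.τle 0).map (B g))
        = (g.hom : K.obj ⟶ (d.τge 0).obj ((d.τle 0).obj L)) := by
      rw [Category.assoc, hπnat, ← Category.assoc, hFm, Category.assoc]
      erw [IsIso.inv_hom_id, Category.comp_id]
    exact ObjectProperty.hom_ext _ hC.symm
  have hfun : (fun g : K ⟶ (H0 d).obj L => g ≫ u)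
      = (fun h : (H0 d).obj K.obj ⟶ I => γ ≫ h) ∘ (φ K.obj) ∘ B := funext key
  rw [hfun]
  haveI := hγ
  exact (precomp_bij γ).comp ((φ K.obj).bijective.comp hBbij)

end DGPAux

open DGPAux

/-- Let `I` be an injective object of the heart of a t-structure and suppose the derived
injective `L(I)` exists, i.e. there is a natural isomorphism `T(−, L(I)) ≅ T^♥(H^0(−), I)`.
Then (1) `L(I) ∈ T_{≥0}`; (2) `H^0(L(I)) ≅ I`; (3) for every `A`, the map
`T(A, L(I)) → T^♥(H^0(A), H^0(L(I)))` induced by `H^0` is an isomorphism. -/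
theorem stmt6 {C : Type*} [Category C]
    [Preadditive C] [HasZeroObject C] [HasShift C ℤ] [∀ n : ℤ, (shiftFunctor C n).Additive]
    [Pretriangulated C]
    (t : TStructure C) (d : TruncData t) (I : Heart t) (hI : Injective I)
    (L : C) (e : yoneda.obj L ≅ (H0 d).op ⋙ yoneda.obj I) :
    t.ge 0 L ∧ Nonempty ((H0 d).obj L ≅ I) ∧
      ∀ A : C, Function.Bijective (fun f : A ⟶ L => (H0 d).map f) := by
  classical
  let φ : ∀ A : C, (A ⟶ L) ≃ ((H0 d).obj A ⟶ I) := fun A => (e.app (op A)).toEquiv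
  let u : (H0 d).obj L ⟶ I := φ L (𝟙 L)
  have hnat0 : ∀ (A : C) (f : A ⟶ L),
      e.hom.app (op A) f = (H0 d).map f ≫ e.hom.app (op L) (𝟙 L) := by
    intro A f
    have h := NatTrans.naturality_apply e.hom f.op (𝟙 L)
    dsimp at h
    simpa using h
  have hnat : ∀ (A : C) (f : A ⟶ L), φ A f = (H0 d).map f ≫ u := fun A f => hnat0 A f
  -- any two maps `H⁰(X) ⟶ I` with `X ∈ T_{≤ -1}` coincide
  have hH0sub : ∀ (X : C), t.le (-1) X → ∀ h₁ h₂ : ((H0 d).obj X ⟶ I), h₁ = h₂ := by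
    intro X hX h₁ h₂
    have hXle0 : t.le 0 X := t.le_monotone (by omega : (-1 : ℤ) ≤ 0) _ hX
    haveI : IsIso ((d.ι 0).app X) := iota_isIso d X hXle0
    have hFX : t.le (-1) ((d.τle 0).obj X) :=
      ((t.le (-1)).prop_iff_of_iso (asIso ((d.ι 0).app X))).2 hX
    have hle : t.le (-1) ((d.τge 0).obj ((d.τle 0).obj X)) := d.τge_LE 0 (-1) _ hFX
    have z1 := tzero t (X := ((H0 d).obj X).obj) (Y := I.obj) h₁.hom (-1) 0 (by omega) hle I.property.2
    have z2 := tzero t (X := ((H0 d).obj X).obj) (Y := I.obj) h₂.hom (-1) 0 (by omega) hle I.property.2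
    apply ObjectProperty.hom_ext
    rw [z1, z2]
  -- (1)
  have hGE : t.ge 0 L :=
    ge_of_orth d L (fun X hX f => (φ X).injective (hH0sub X hX (φ X f) (φ X 0)))
  -- post-composition with u is bijective on the heart
  have postu := post_u_bij d I L φ u hnat hGE
  obtain ⟨v, hv⟩ := (postu I).2 (𝟙 I)
  have hv' : v ≫ u = 𝟙 I := hv
  have huv : u ≫ v = 𝟙 ((H0 d).obj L) := by
    apply (postu ((H0 d).obj L)).1
    show (u ≫ v) ≫ u = 𝟙 ((H0 d).obj L) ≫ u
    rw [Category.assoc, hv', Category.comp_id, Category.id_comp]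
  refine ⟨hGE, ⟨⟨u, v, huv, hv'⟩⟩, ?_⟩
  intro A
  constructor
  · intro f₁ f₂ hmap
    have hm : (H0 d).map f₁ = (H0 d).map f₂ := hmap
    apply (φ A).injective
    rw [hnat A f₁, hnat A f₂, hm]
  · intro h
    refine ⟨(φ A).symm (h ≫ u), ?_⟩
    have h1 : (H0 d).map ((φ A).symm (h ≫ u)) ≫ u = h ≫ u := by
      rw [← hnat A]
      exact (φ A).apply_symm_apply _
    have h2 := congrArg (fun q => q ≫ v) h1
    simp only [Category.assoc, huv, Category.comp_id] at h2
    exact h2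
end

section
/- Let T be a triangulated category with a t-structure, let E ∈ T be a derived injective, and let g : A → B be a t-monomorphism (A ∈ T_{≤0} and cone(g) ∈ T_{≥0}). Then the induced map g* : T(B, E) → T(A, E) is surjective; that is, every morphism f : A → E extends along g to a morphism f̃ : B → E with f̃ ∘ g = f. -/
open CategoryTheory Limits Pretriangulated Triangulated Opposite

open DGP

/-- Let `E` be a derived injective and let `g : A ⟶ B` be a t-monomorphism (`A ∈ T_{≤0}`
and `cone(g) ∈ T_{≥0}`). Then the induced map `g* : T(B, E) → T(A, E)` is surjective;
that is, every morphism `f : A ⟶ E` extends along `g`. -/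
theorem stmt8 {C : Type*} [Category C]
    [Preadditive C] [HasZeroObject C] [HasShift C ℤ] [∀ n : ℤ, (shiftFunctor C n).Additive]
    [Pretriangulated C]
    (t : TStructure C) (d : TruncData t) (E : C) (hE : IsDerivedInjective d E)
    {A B : C} (g : A ⟶ B) (hA : t.le 0 A) (hg : IsTMono t g) :
    Function.Surjective (fun ft : B ⟶ E => g ≫ ft) := by
  obtain ⟨I, _hI, ⟨α⟩⟩ := hE
  obtain ⟨Z, h, δ, hT, hZ⟩ := hg
  intro f
  set X := Z⟦(-1 : ℤ)⟧ with hX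
  have hZ1 : t.ge 1 X := t.ge_shift 0 (-1) 1 (by norm_num) Z hZ
  have hι : (d.ι 0).app X = 0 := t.zero' _ (d.τleLE 0 X) hZ1
  have hid : (𝟙 ((d.τle 0).obj X)) = 0 := by
    apply (d.le_univ 0 _ X (d.τleLE 0 X)).1
    simp [hι]
  have hsub1 : ∀ (Y : C) (u v : (d.τle 0).obj X ⟶ Y), u = v := by
    intro Y u v
    calc u = 𝟙 _ ≫ u := (Category.id_comp u).symm
    _ = 𝟙 _ ≫ v := by rw [hid]; simp
    _ = v := Category.id_comp v
  have hsub2 : ∀ u v : ((H0 d).obj X ⟶ I), u = v := by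
    intro u v
    apply ObjectProperty.hom_ext
    apply (d.ge_univ 0 ((d.τle 0).obj X) I.obj I.property.2).1
    exact hsub1 _ _ _
  have hsub : ∀ u v : (X ⟶ E), u = v := by
    intro u v
    have hu := ConcreteCategory.congr_hom (α.hom_inv_id_app (op X)) u
    have hv := ConcreteCategory.congr_hom (α.hom_inv_id_app (op X)) v
    simp only [NatTrans.comp_app, types_comp_apply, NatTrans.id_app, types_id_apply] at hu hv
    rw [← hu, ← hv, hsub2 (α.hom.app (op X) u) (α.hom.app (op X) v)]
  obtain ⟨ft, hft⟩ := Triangle.yoneda_exact₂ _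
    (inv_rot_of_distTriang _ hT) f (hsub _ 0)
  exact ⟨ft, hft.symm⟩
end

section
/- Let T be a triangulated category with a t-structure such that T has small coproducts, every cohomological functor T^op → Ab that sends small coproducts in T to products is representable (Brown representability), and the cohomological functor H^0 : T → T^♥ preserves small coproducts. Then T has derived injectives: for every injective object I of the heart T^♥, the functor T^♥(H^0(−), I) : T^op → Ab is representable. -/
open CategoryTheory Limits Pretriangulated Triangulated Opposite

open DGP Opposite

namespace StmtAux

open CategoryTheory Limits Pretriangulated Triangulated Opposite DGP

universe v u

variable {C : Type u} [Category.{v} C] [Preadditive C] [HasZeroObject C] [HasShift C ℤ]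
  [∀ n : ℤ, (shiftFunctor C n).Additive] [Pretriangulated C]
variable {t : TStructure C}

lemma zeroLEGE (t : TStructure C) {X Y : C} (f : X ⟶ Y) (n : ℤ)
    (hX : t.le n X) (hY : t.ge (n + 1) Y) : f = 0 := by
  apply (shiftFunctor C n).map_injective
  rw [Functor.map_zero]
  exact t.zero' _ (t.le_shift n n 0 (by omega) X hX) (t.ge_shift (n + 1) n 1 (by omega) Y hY)

lemma extLE (d : TruncData t) (n : ℤ) (T : Triangle C) (hT : T ∈ distTriang C)
    (h₁ : t.le n T.obj₁) (h₃ : t.le n T.obj₃) : t.le n T.obj₂ := by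
  have hπ : T.mor₁ ≫ (d.π (n + 1)).app T.obj₂ = 0 :=
    zeroLEGE t _ n h₁ (d.τgeGE (n + 1) T.obj₂)
  obtain ⟨c, hc⟩ := Triangle.yoneda_exact₂ T hT _ hπ
  have hπ0 : (d.π (n + 1)).app T.obj₂ = 0 := by
    rw [hc, zeroLEGE t c n h₃ (d.τgeGE (n + 1) T.obj₂), comp_zero]
  obtain ⟨s, hs⟩ := Triangle.coyoneda_exact₂ _ (d.tri n T.obj₂) (𝟙 T.obj₂)
    (by show 𝟙 T.obj₂ ≫ (d.π (n + 1)).app T.obj₂ = 0; rw [hπ0, comp_zero])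
  dsimp at hs
  have hιs : (d.ι n).app T.obj₂ ≫ s = 𝟙 _ := by
    apply (d.le_univ n _ T.obj₂ (d.τleLE n T.obj₂)).injective
    show ((d.ι n).app T.obj₂ ≫ s) ≫ (d.ι n).app T.obj₂ = 𝟙 _ ≫ (d.ι n).app T.obj₂
    erw [Category.assoc, ← hs]; simp
  have : IsIso ((d.ι n).app T.obj₂) := ⟨s, hιs, hs.symm⟩
  exact (t.le n).prop_of_iso (asIso ((d.ι n).app T.obj₂)) (d.τleLE n T.obj₂)

lemma extGE (d : TruncData t) (m n : ℤ) (hmn : m + 1 = n) (T : Triangle C)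
    (hT : T ∈ distTriang C) (h₁ : t.ge n T.obj₁) (h₃ : t.ge n T.obj₃) : t.ge n T.obj₂ := by
  subst hmn
  have hι : (d.ι m).app T.obj₂ ≫ T.mor₂ = 0 := zeroLEGE t _ m (d.τleLE m T.obj₂) h₃
  obtain ⟨c, hc⟩ := Triangle.coyoneda_exact₂ T hT _ hι
  have hι0 : (d.ι m).app T.obj₂ = 0 := by
    rw [hc, zeroLEGE t c m (d.τleLE m T.obj₂) h₁, zero_comp]
  obtain ⟨r, hr⟩ := Triangle.yoneda_exact₂ _ (d.tri m T.obj₂) (𝟙 T.obj₂)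
    (by show (d.ι m).app T.obj₂ ≫ 𝟙 T.obj₂ = 0; rw [hι0, zero_comp])
  dsimp at hr
  have hrπ : r ≫ (d.π (m + 1)).app T.obj₂ = 𝟙 _ := by
    apply (d.ge_univ (m + 1) T.obj₂ _ (d.τgeGE (m + 1) T.obj₂)).injective
    show (d.π (m + 1)).app T.obj₂ ≫ r ≫ (d.π (m + 1)).app T.obj₂ =
      (d.π (m + 1)).app T.obj₂ ≫ 𝟙 _
    erw [← Category.assoc, ← hr]; simp
  have : IsIso ((d.π (m + 1)).app T.obj₂) := ⟨r, hr.symm, hrπ⟩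
  exact (t.ge (m + 1)).prop_of_iso (asIso ((d.π (m + 1)).app T.obj₂)).symm
    (d.τgeGE (m + 1) T.obj₂)

lemma τle_map_zero (d : TruncData t) (n : ℤ) (A B : C) :
    (d.τle n).map (0 : A ⟶ B) = 0 := by
  apply (d.le_univ n _ B (d.τleLE n A)).injective
  show (d.τle n).map (0 : A ⟶ B) ≫ (d.ι n).app B = (0 : _ ⟶ (d.τle n).obj B) ≫ (d.ι n).app B
  rw [(d.ι n).naturality]
  simp

lemma τge_map_zero (d : TruncData t) (n : ℤ) (A B : C) :
    (d.τge n).map (0 : A ⟶ B) = 0 := by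
  apply (d.ge_univ n A _ (d.τgeGE n B)).injective
  show (d.π n).app A ≫ (d.τge n).map (0 : A ⟶ B) = (d.π n).app A ≫ 0
  rw [← (d.π n).naturality]
  simp


lemma ext1_vanish (d : TruncData t) (I : Heart t) (hI : Injective I)
    (W : Heart t) (χ : W.obj ⟶ I.obj⟦(1 : ℤ)⟧) : χ = 0 := by
  haveI := hI
  obtain ⟨E, a, b, hTE⟩ := distinguished_cocone_triangle₂ χ
  have hELE : t.le 0 E := extLE d 0 _ hTE I.property.1 W.property.1
  have hEGE : t.ge 0 E := extGE d (-1) 0 (by omega) _ hTE I.property.2 W.property.2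
  let Eh : Heart t := ⟨E, hELE, hEGE⟩
  let a' : I ⟶ Eh := ObjectProperty.homMk a
  haveI : Mono a' := by
    constructor
    intro Z u v huv
    let uC : Z.obj ⟶ I.obj := u.hom
    let vC : Z.obj ⟶ I.obj := v.hom
    have huvC : uC ≫ a = vC ≫ a := congrArg (fun f => f.hom) huv
    have h0 : (uC - vC) ≫ a = 0 := by
      rw [Preadditive.sub_comp, huvC]; simp
    obtain ⟨s, hs⟩ := Triangle.coyoneda_exact₂ _
      (inv_rot_of_distTriang _ hTE) (uC - vC) h0
    have hs0 : s = 0 := zeroLEGE t s 0 Z.property.1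
      (t.ge_shift 0 (-1) (0 + 1) (by omega) W.obj W.property.2)
    have hfin : uC - vC = 0 := by rw [hs, hs0, zero_comp]; rfl
    ext; exact sub_eq_zero.1 hfin
  obtain ⟨r, hr⟩ := Injective.factors (𝟙 I) a'
  have hrC : a ≫ r.hom = 𝟙 I.obj := congrArg (fun f => f.hom) hr
  have h31 : χ ≫ a⟦(1 : ℤ)⟧' = 0 := comp_distTriang_mor_zero₃₁ _ hTE
  calc χ = χ ≫ (a ≫ r.hom)⟦(1 : ℤ)⟧' := by rw [hrC]; simp
    _ = (χ ≫ a⟦(1 : ℤ)⟧') ≫ r.hom⟦(1 : ℤ)⟧' := by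
        rw [Functor.map_comp, Category.assoc]
    _ = 0 := by rw [h31, zero_comp]

lemma ge1_vanish (d : TruncData t) (I : Heart t) (hI : Injective I) {W : C}
    (h1 : t.ge (0 + 1) W) (h2 : t.le 1 W) (ψ : W ⟶ I.obj) : ψ = 0 := by
  have hle : t.le 0 (W⟦(1 : ℤ)⟧) := t.le_shift 1 1 0 (by omega) W h2
  have hge : t.ge 0 (W⟦(1 : ℤ)⟧) := t.ge_shift (0 + 1) 1 0 (by omega) W h1
  have h := ext1_vanish d I hI ⟨W⟦(1 : ℤ)⟧, hle, hge⟩ ((shiftFunctor C (1 : ℤ)).map ψ)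
  apply (shiftFunctor C (1 : ℤ)).map_injective
  rw [Functor.map_zero]
  exact h


/-- Key exactness: for `I` injective in the heart, `Hom(H⁰(−), I)` sends distinguished
triangles to exact sequences (the surjectivity half). -/
lemma key (d : TruncData t) (I : Heart t) (hI : Injective I)
    (T' : Triangle C) (hT' : T' ∈ distTriang C)
    (u : ((d.τge 0).obj ((d.τle 0).obj T'.obj₂)) ⟶ I.obj)
    (hu : (d.τge 0).map ((d.τle 0).map T'.mor₁) ≫ u = 0) :
    ∃ z : ((d.τge 0).obj ((d.τle 0).obj T'.obj₃)) ⟶ I.obj,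
      (d.τge 0).map ((d.τle 0).map T'.mor₂) ≫ z = u := by
  obtain ⟨M, σ, τ, hTM⟩ := distinguished_cocone_triangle ((d.τle 0).map T'.mor₂)
  have hM : t.le 0 M := by
    apply extLE d 0 (Triangle.mk ((d.τle 0).map T'.mor₂) σ τ).rotate (rot_of_distTriang _ hTM)
    · exact d.τleLE 0 T'.obj₃
    · exact t.le_monotone (show (-1 : ℤ) ≤ 0 by omega) _
        (t.le_shift 0 1 (-1) (by omega) _ (d.τleLE 0 T'.obj₂))
  have hTM' := inv_rot_of_distTriang _ hTM
  set TI := (Triangle.mk ((d.τle 0).map T'.mor₂) σ τ).invRotate with hTIdef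
  have hNle : t.le 1 TI.obj₁ := t.le_shift 0 (-1) 1 (by omega) M hM
  set v : (d.τle 0).obj T'.obj₂ ⟶ I.obj := (d.π 0).app ((d.τle 0).obj T'.obj₂) ≫ u with hv
  have hjv : (d.τle 0).map T'.mor₁ ≫ v = 0 := by
    rw [hv, ← Category.assoc]
    have hnat := (d.π 0).naturality ((d.τle 0).map T'.mor₁)
    simp only [Functor.id_map] at hnat
    rw [hnat, Category.assoc, hu, comp_zero]
  have hρv : TI.mor₁ ≫ v = 0 := by
    have hρk : TI.mor₁ ≫ (d.τle 0).map T'.mor₂ = 0 := comp_distTriang_mor_zero₁₂ _ hTM'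
    have hεv : ((d.ι 0).app TI.obj₁ ≫ TI.mor₁) ≫ v = 0 := by
      have hφg : (((d.ι 0).app TI.obj₁ ≫ TI.mor₁) ≫ (d.ι 0).app T'.obj₂) ≫ T'.mor₂ = 0 := by
        have hnat := (d.ι 0).naturality T'.mor₂
        simp only [Functor.id_map] at hnat
        erw [Category.assoc, Category.assoc, ← hnat, ← Category.assoc TI.mor₁, hρk]; simp
      obtain ⟨α, hα⟩ := Triangle.coyoneda_exact₂ T' hT' _ hφg
      obtain ⟨αt, hαt⟩ := (d.le_univ 0 ((d.τle 0).obj TI.obj₁) T'.obj₁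
        (d.τleLE 0 TI.obj₁)).surjective α
      simp only at hαt
      have hfac : αt ≫ (d.τle 0).map T'.mor₁ = (d.ι 0).app TI.obj₁ ≫ TI.mor₁ := by
        apply (d.le_univ 0 ((d.τle 0).obj TI.obj₁) T'.obj₂ (d.τleLE 0 TI.obj₁)).injective
        have hnat := (d.ι 0).naturality T'.mor₁
        simp only [Functor.id_map] at hnat
        show (αt ≫ (d.τle 0).map T'.mor₁) ≫ (d.ι 0).app T'.obj₂
          = ((d.ι 0).app TI.obj₁ ≫ TI.mor₁) ≫ (d.ι 0).app T'.obj₂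
        rw [Category.assoc, hnat, ← Category.assoc, hαt, ← hα]
      erw [← hfac, Category.assoc, hjv, comp_zero]
    obtain ⟨ψ, hψ⟩ := Triangle.yoneda_exact₂ _ (d.tri 0 TI.obj₁) (TI.mor₁ ≫ v)
      (by erw [← Category.assoc]; exact hεv)
    have hψ0 : ψ = 0 :=
      ge1_vanish d I hI (d.τgeGE (0 + 1) TI.obj₁) (d.τge_LE (0 + 1) 1 TI.obj₁ hNle) ψ
    erw [hψ, hψ0, comp_zero]; rfl
  obtain ⟨w, hw⟩ := Triangle.yoneda_exact₂ _ hTM' v hρv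
  obtain ⟨z, hz⟩ := (d.ge_univ 0 ((d.τle 0).obj T'.obj₃) I.obj I.property.2).surjective w
  simp only at hz
  refine ⟨z, ?_⟩
  apply (d.ge_univ 0 ((d.τle 0).obj T'.obj₂) I.obj I.property.2).injective
  show (d.π 0).app _ ≫ (d.τge 0).map ((d.τle 0).map T'.mor₂) ≫ z = (d.π 0).app _ ≫ u
  have hnat := (d.π 0).naturality ((d.τle 0).map T'.mor₂)
  simp only [Functor.id_map] at hnat
  rw [← Category.assoc, ← hnat, Category.assoc, hz]
  exact hw.symm

end StmtAux

open StmtAux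

/-- Let `T` be a triangulated category with a t-structure, which has small coproducts and
satisfies Brown representability (every cohomological functor `Tᵒᵖ ⥤ Ab` sending small
coproducts to products is representable), and whose cohomological functor
`H^0 : T ⥤ T^♥` preserves small coproducts. Then `T` has derived injectives: for every
injective object `I` of the heart, the functor `T^♥(H^0(−), I)` is representable. -/
theorem stmt9 {C : Type u} [Category.{v} C]
    [Preadditive C] [HasZeroObject C] [HasShift C ℤ] [∀ n : ℤ, (shiftFunctor C n).Additive]
    [Pretriangulated C] [HasCoproducts.{v} C]
    (t : TStructure C) (d : TruncData t)
    (brown : ∀ F : Cᵒᵖ ⥤ AddCommGrpCat.{v},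
      -- `F` is cohomological
      (∀ T' : Triangle C, T' ∈ (distTriang C) →
        ∀ y : F.obj (op T'.obj₂), F.map T'.mor₁.op y = 0 ↔
          ∃ z : F.obj (op T'.obj₃), F.map T'.mor₂.op z = y) →
      -- `F` sends small coproducts to products
      (∀ (J : Type v) (X : J → C),
        Function.Bijective
          (fun (y : F.obj (op (∐ X))) (j : J) => F.map (Sigma.ι X j).op y)) →
      -- then `F` is representable
      ∃ L : C, Nonempty (yoneda.obj L ≅ F ⋙ forget AddCommGrpCat))
    (hH0 : ∀ J : Type v, Nonempty (PreservesColimitsOfShape (Discrete J) (H0 d))) :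
    ∀ I : Heart t, Injective I →
      ∃ L : C, Nonempty (yoneda.obj L ≅ (H0 d).op ⋙ yoneda.obj I) := by
  intro I hI
  classical
  -- The Hom-functor `X ↦ Hom(H⁰(X), I)`, as a functor to abelian groups.
  let F : Cᵒᵖ ⥤ AddCommGrpCat.{v} :=
    { obj := fun X => AddCommGrpCat.of (((d.τge 0).obj ((d.τle 0).obj X.unop)) ⟶ I.obj)
      map := fun {X Y} φ => AddCommGrpCat.ofHom
        { toFun := fun y => (d.τge 0).map ((d.τle 0).map φ.unop) ≫ y
          map_zero' := comp_zero
          map_add' := fun y₁ y₂ => by simp }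
      map_id := fun X => by
        ext y
        show (d.τge 0).map ((d.τle 0).map (𝟙 X.unop)) ≫ y = y
        simp
      map_comp := fun {X Y Z} φ ψ => by
        ext y
        show (d.τge 0).map ((d.τle 0).map (ψ.unop ≫ φ.unop)) ≫ y =
          (d.τge 0).map ((d.τle 0).map ψ.unop) ≫ (d.τge 0).map ((d.τle 0).map φ.unop) ≫ y
        simp }
  have hcoh : ∀ T' : Triangle C, T' ∈ (distTriang C) →
      ∀ y : F.obj (op T'.obj₂), F.map T'.mor₁.op y = 0 ↔
        ∃ z : F.obj (op T'.obj₃), F.map T'.mor₂.op z = y := by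
    intro T' hT' y
    constructor
    · intro hy
      exact StmtAux.key d I hI T' hT' y hy
    · rintro ⟨z, rfl⟩
      show (d.τge 0).map ((d.τle 0).map T'.mor₁) ≫
        (d.τge 0).map ((d.τle 0).map T'.mor₂) ≫ z = 0
      rw [← Category.assoc, ← Functor.map_comp, ← Functor.map_comp,
        comp_distTriang_mor_zero₁₂ _ hT', StmtAux.τle_map_zero, StmtAux.τge_map_zero,
        zero_comp]
  have hprod : ∀ (J : Type v) (X : J → C),
      Function.Bijective
        (fun (y : F.obj (op (∐ X))) (j : J) => F.map (Sigma.ι X j).op y) := by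
    intro J X
    obtain ⟨hpres⟩ := hH0 J
    have hc : IsColimit ((H0 d).mapCocone (colimit.cocone (Discrete.functor X))) :=
      isColimitOfPreserves (H0 d) (colimit.isColimit _)
    constructor
    · intro y₁ y₂ h
      suffices hs : ObjectProperty.homMk y₁ = (ObjectProperty.homMk y₂ : (H0 d).obj (∐ X) ⟶ I) from
        congrArg (fun f => f.hom) hs
      refine hc.hom_ext ?_
      rintro ⟨j⟩
      ext; exact congrFun h j
    · intro p
      refine ⟨(hc.desc { pt := I, ι := Discrete.natTrans (fun j => ObjectProperty.homMk (p j.as)) }).hom, ?_⟩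
      funext j
      exact congrArg (fun f => f.hom)
        (hc.fac { pt := I, ι := Discrete.natTrans (fun j => ObjectProperty.homMk (p j.as)) } ⟨j⟩)
  obtain ⟨L, ⟨eL⟩⟩ := brown F hcoh hprod
  exact ⟨L, ⟨eL ≪≫ NatIso.ofComponents (fun X => Equiv.toIso
      ⟨fun y => ObjectProperty.homMk y, fun f => f.hom, fun _ => rfl, fun _ => rfl⟩) (fun φ => rfl)⟩⟩
end

section
/- Let T be a triangulated category with a t-structure satisfying: T has small coproducts; the cohomological functor H^0 : T → T^♥ preserves small coproducts; filtered colimits exist and are exact in the heart T^♥; and there is a small set 𝒰 of objects of T_{≤0} such that every A ∈ T_{≤0} admits a t-epimorphism ⊕_{i∈I} U_i ↠ A with all U_i ∈ 𝒰. Then the heart T^♥ is a Grothendieck abelian category (cocomplete, with exact filtered colimits and a generator), and the set {H^0(U) : U ∈ 𝒰} is a set of generators of T^♥. -/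
open CategoryTheory Limits Pretriangulated Triangulated Opposite

open DGP

namespace DGPAux

open DGP

universe v u

variable {C : Type u} [Category.{v} C] [Preadditive C] [HasZeroObject C] [HasShift C ℤ]
  [∀ n : ℤ, (shiftFunctor C n).Additive] [Pretriangulated C]
variable {t : TStructure C} (d : TruncData t)

lemma isIso_iota {X : C} (hX : t.le 0 X) : IsIso ((d.ι 0).app X) := by
  obtain ⟨s, hs⟩ := (d.le_univ 0 X X hX).2 (𝟙 X)
  dsimp at hs
  refine ⟨s, ?_, hs⟩
  have := (d.le_univ 0 ((d.τle 0).obj X) X (d.τleLE 0 X)).1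
    (a₁ := (d.ι 0).app X ≫ s) (a₂ := 𝟙 _) ?_
  · exact this
  · dsimp
    rw [Category.assoc, hs, Category.comp_id, Category.id_comp]

lemma isIso_pi {X : C} (hX : t.ge 0 X) : IsIso ((d.π 0).app X) := by
  obtain ⟨s, hs⟩ := (d.ge_univ 0 X X hX).2 (𝟙 X)
  dsimp at hs
  refine ⟨s, hs, ?_⟩
  have := (d.ge_univ 0 X ((d.τge 0).obj X) (d.τgeGE 0 X)).1
    (a₁ := s ≫ (d.π 0).app X) (a₂ := 𝟙 _) ?_
  · exact this
  · dsimp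
    rw [← Category.assoc, hs, Category.comp_id, Category.id_comp]

/-- The natural comparison `X ⟶ H⁰(X)` (in `C`) for `X ∈ T_{≤0}`. -/
noncomputable def nu {X : C} (hX : t.le 0 X) :
    X ⟶ (d.τge 0).obj ((d.τle 0).obj X) :=
  haveI := isIso_iota d hX
  inv ((d.ι 0).app X) ≫ (d.π 0).app ((d.τle 0).obj X)

lemma nu_natural {X Y : C} (f : X ⟶ Y) (hX : t.le 0 X) (hY : t.le 0 Y) :
    nu d hX ≫ (d.τge 0).map ((d.τle 0).map f) = f ≫ nu d hY := by
  haveI := isIso_iota d hX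
  haveI := isIso_iota d hY
  have h1 : (d.τle 0).map f ≫ (d.ι 0).app Y = (d.ι 0).app X ≫ f := by
    simpa using (d.ι 0).naturality f
  have h2 : inv ((d.ι 0).app X) ≫ (d.τle 0).map f = f ≫ inv ((d.ι 0).app Y) := by
    rw [IsIso.eq_comp_inv, Category.assoc, h1, IsIso.inv_hom_id_assoc]
  have h3 : (d.π 0).app ((d.τle 0).obj X) ≫ (d.τge 0).map ((d.τle 0).map f)
      = (d.τle 0).map f ≫ (d.π 0).app ((d.τle 0).obj Y) := by
    simpa using ((d.π 0).naturality ((d.τle 0).map f)).symm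
  unfold nu
  rw [Category.assoc, h3, ← Category.assoc, h2, Category.assoc]

lemma isIso_nu {X : C} (hX : t.le 0 X) (hX' : t.ge 0 X) : IsIso (nu d hX) := by
  haveI := isIso_iota d hX
  haveI : IsIso ((d.π 0).app ((d.τle 0).obj X)) := by
    apply isIso_pi
    exact (t.ge 0).prop_of_iso (asIso ((d.ι 0).app X)).symm hX'
  have h0 : nu d hX = inv ((d.ι 0).app X) ≫ (d.π 0).app ((d.τle 0).obj X) := rfl
  rw [h0]
  infer_instance

lemma nu_cancel {X : C} (hX : t.le 0 X) {Y : C} (hY : t.ge 0 Y)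
    {a b : (d.τge 0).obj ((d.τle 0).obj X) ⟶ Y} (h : nu d hX ≫ a = nu d hX ≫ b) :
    a = b := by
  haveI := isIso_iota d hX
  have h0 : nu d hX = inv ((d.ι 0).app X) ≫ (d.π 0).app ((d.τle 0).obj X) := rfl
  apply (d.ge_univ 0 ((d.τle 0).obj X) Y hY).1
  dsimp
  have h' := congrArg (fun x => (d.ι 0).app X ≫ x) h
  dsimp at h'
  rw [h0] at h'
  simpa using h'

/-- The comparison morphism `A ⟶ H⁰(A)` in the heart, for `A` in the heart. -/
noncomputable def nuH (A : Heart t) : A ⟶ (H0 d).obj A.obj :=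
  ObjectProperty.homMk (nu d A.property.1)

instance (A : Heart t) : IsIso (nuH d A) := by
  obtain ⟨i, h1, h2⟩ := (isIso_nu d A.property.1 A.property.2).out
  exact ⟨ObjectProperty.homMk i, InducedCategory.hom_ext h1, InducedCategory.hom_ext h2⟩

lemma tEpi_cancel {A B Y : C} {p : A ⟶ B} (hp : IsTEpi t p) (hY : t.ge 0 Y)
    {q : B ⟶ Y} (hq : p ≫ q = 0) : q = 0 := by
  obtain ⟨Z, gz, hz, hTri, hZ⟩ := hp
  obtain ⟨w, hw⟩ := Triangle.yoneda_exact₃ _ hTri q hq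
  have hw0 : w = 0 := by
    apply (shiftFunctor C (-1 : ℤ)).map_injective
    rw [Functor.map_zero]
    exact t.zero' _
      (t.le_shift (-1) (-1) 0 (by omega) _ (t.le_shift 0 1 (-1) (by omega) _ hZ))
      (t.ge_shift 0 (-1) 1 (by omega) _ hY)
  rw [hw, hw0]; exact comp_zero

end DGPAux


open DGPAux

/-- Let `T` be a triangulated category with a t-structure such that: `T` has small
coproducts; `H^0` preserves small coproducts; filtered colimits exist and are exact in the
heart; and there is a small family `U : ι → T` of objects of `T_{≤0}` such that every
`A ∈ T_{≤0}` admits a t-epimorphism from a coproduct of objects of the family. Then the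
heart is a Grothendieck abelian category: it is cocomplete (filtered colimits being exact
by assumption) and the family `{H^0(U i)}` is a set of generators, i.e. every object of the
heart admits an epimorphism from a coproduct of objects `H^0(U i)`. -/
theorem stmt11 {C : Type u} [Category.{v} C]
    [Preadditive C] [HasZeroObject C] [HasShift C ℤ] [∀ n : ℤ, (shiftFunctor C n).Additive]
    [Pretriangulated C] [HasCoproducts.{v} C]
    (t : TStructure C) (d : TruncData t) [Abelian (Heart t)]
    (hH0 : ∀ J : Type v, Nonempty (PreservesColimitsOfShape (Discrete J) (H0 d)))
    [HasFilteredColimitsOfSize.{v, v} (Heart t)]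
    (hexact : ∀ (J : Type v) [SmallCategory J] [IsFiltered J],
      Nonempty (PreservesFiniteLimits (colim (J := J) (C := Heart t))))
    (ι : Type v) (U : ι → C) (hU : ∀ i, t.le 0 (U i))
    (hgen : ∀ A : C, t.le 0 A →
      ∃ (J : Type v) (g : J → ι) (p : (∐ fun j => U (g j)) ⟶ A), IsTEpi t p) :
    Nonempty (HasColimits (Heart t)) ∧
      ∀ A : Heart t, ∃ (J : Type v) (g : J → ι) (P : Heart t)
        (inj : ∀ j : J, (H0 d).obj (U (g j)) ⟶ P),
        Nonempty (IsColimit (Cofan.mk P inj)) ∧ ∃ π : P ⟶ A, Epi π := by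
  classical
  have key : ∀ (J : Type v) (X : J → C),
      Nonempty (IsColimit (Cofan.mk ((H0 d).obj (∐ X))
        (fun j => (H0 d).map (Sigma.ι X j)))) := by
    intro J X
    haveI := (hH0 J).some
    have h1 : IsColimit ((H0 d).mapCocone (colimit.cocone (Discrete.functor X))) :=
      isColimitOfPreserves (H0 d) (colimit.isColimit _)
    exact ⟨(IsColimit.equivOfNatIsoOfIso
      (Discrete.natIso (F := Discrete.functor X ⋙ H0 d)
        (G := Discrete.functor (fun j => (H0 d).obj (X j))) (fun j => Iso.refl _))
      ((H0 d).mapCocone (colimit.cocone (Discrete.functor X)))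
      (Cofan.mk ((H0 d).obj (∐ X)) (fun j => (H0 d).map (Sigma.ι X j)))
      (Cocones.ext (Iso.refl _) (by rintro ⟨j⟩; simp))) h1⟩
  constructor
  · -- cocompleteness of the heart
    haveI : HasCoproducts.{v} (Heart t) := by
      intro J
      constructor
      intro F
      have hF : HasColimit (Discrete.functor (F.obj ∘ Discrete.mk)) := by
        obtain ⟨hc⟩ := key J (fun j => (F.obj ⟨j⟩).obj)
        refine HasColimit.mk ⟨Cofan.mk ((H0 d).obj (∐ (fun j => (F.obj ⟨j⟩).obj)))
          (fun j => nuH d (F.obj ⟨j⟩) ≫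
            (H0 d).map (Sigma.ι (fun j => (F.obj ⟨j⟩).obj) j)), ?_⟩
        exact (IsColimit.equivOfNatIsoOfIso
          (Discrete.natIso (F := Discrete.functor (fun j => (H0 d).obj ((F.obj ⟨j⟩).obj)))
            (G := Discrete.functor (F.obj ∘ Discrete.mk))
            (fun j => (asIso (nuH d (F.obj ⟨j.as⟩))).symm))
          (Cofan.mk ((H0 d).obj (∐ (fun j => (F.obj ⟨j⟩).obj)))
            (fun j => (H0 d).map (Sigma.ι (fun j => (F.obj ⟨j⟩).obj) j)))
          (Cofan.mk ((H0 d).obj (∐ (fun j => (F.obj ⟨j⟩).obj)))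
            (fun j => nuH d (F.obj ⟨j⟩) ≫
              (H0 d).map (Sigma.ι (fun j => (F.obj ⟨j⟩).obj) j)))
          (Cocones.ext (Iso.refl _) (by rintro ⟨j⟩; simp))) hc
      exact hasColimit_of_iso Discrete.natIsoFunctor
    haveI : HasCoequalizers (Heart t) := inferInstance
    exact ⟨has_colimits_of_hasCoequalizers_and_coproducts⟩
  · -- generators
    intro A
    obtain ⟨J, g, p, hp⟩ := hgen A.obj A.property.1
    refine ⟨J, g, (H0 d).obj (∐ fun j => U (g j)),
      fun j => (H0 d).map (Sigma.ι (fun j => U (g j)) j), key J _, ?_⟩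
    refine ⟨(H0 d).map p ≫ inv (nuH d A), ⟨fun {Z} q1 q2 hq => ?_⟩⟩
    have hq' := congrArg (fun x => (heartι t).map x) hq
    simp only [Functor.map_comp, Category.assoc] at hq'
    have hd1 : (heartι t).map ((H0 d).map p) = (d.τge 0).map ((d.τle 0).map p) := rfl
    rw [hd1] at hq'
    set r1 : (d.τge 0).obj ((d.τle 0).obj A.obj) ⟶ Z.obj :=
      (heartι t).map (inv (nuH d A)) ≫ (heartι t).map q1 with hr1
    set r2 : (d.τge 0).obj ((d.τle 0).obj A.obj) ⟶ Z.obj :=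
      (heartι t).map (inv (nuH d A)) ≫ (heartι t).map q2 with hr2
    have hs : (d.τge 0).map ((d.τle 0).map p) ≫ (r1 - r2) = 0 := by
      rw [Preadditive.comp_sub]; exact sub_eq_zero.mpr hq'
    have hu : p ≫ (nu d A.property.1 ≫ (r1 - r2)) = 0 := by
      apply Sigma.hom_ext
      intro j
      rw [comp_zero, ← Category.assoc, ← Category.assoc,
        ← nu_natural d (Sigma.ι (fun j => U (g j)) j ≫ p) (hU (g j)) A.property.1]
      simp only [Functor.map_comp, Category.assoc]
      rw [hs, comp_zero, comp_zero]
    have hnus : nu d A.property.1 ≫ (r1 - r2) = 0 :=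
      tEpi_cancel hp Z.property.2 hu
    have hs0 : r1 = r2 := by
      rw [← sub_eq_zero]
      apply nu_cancel d A.property.1 Z.property.2
      rw [hnus, comp_zero]
    apply (heartι t).map_injective
    have e : ∀ q : A ⟶ Z, nu d A.property.1 ≫
        ((heartι t).map (inv (nuH d A)) ≫ (heartι t).map q) = (heartι t).map q := by
      intro q
      have h0 : nu d A.property.1 = (heartι t).map (nuH d A) := rfl
      rw [h0]
      have h1 := congrArg (heartι t).map (IsIso.hom_inv_id_assoc (nuH d A) q)
      rw [Functor.map_comp, Functor.map_comp] at h1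
      exact h1
    calc (heartι t).map q1 = nu d A.property.1 ≫ r1 := (e q1).symm
      _ = nu d A.property.1 ≫ r2 := by rw [hs0]
      _ = (heartι t).map q2 := e q2
end

section
/- Let T be a triangulated category with a t-structure and let I be an object of the heart T^♥. Then I is an injective object of the abelian category T^♥ if and only if T(Z[-1], I) ≅ 0 for every Z ∈ T^♥. -/
open CategoryTheory Limits Pretriangulated Triangulated Opposite

open DGP

namespace TAux

open CategoryTheory Limits Pretriangulated Triangulated

variable {C : Type*} [Category C] [Preadditive C] [HasZeroObject C] [HasShift C ℤ]
  [∀ n : ℤ, (shiftFunctor C n).Additive] [Pretriangulated C]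
variable (t : TStructure C)

lemma zero_gen {X Y : C} (f : X ⟶ Y) (a b : ℤ) (hab : a < b)
    (hX : t.le a X) (hY : t.ge b Y) : f = 0 := by
  have h1 : t.le 0 (X⟦a⟧) := t.le_shift a a 0 (by omega) X hX
  have h2 : t.ge (b - a) (Y⟦a⟧) := t.ge_shift b a (b - a) (by omega) Y hY
  have h3 : t.ge 1 (Y⟦a⟧) := t.ge_antitone (by omega : (1:ℤ) ≤ b - a) _ h2
  have : (shiftFunctor C a).map f = 0 := t.zero' _ h1 h3
  apply (shiftFunctor C a).map_injective
  rw [this, Functor.map_zero]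

lemma le_of_retract {X A : C} (r : X ⟶ A) (p : A ⟶ X) (hrp : r ≫ p = 𝟙 X)
    (n : ℤ) (hA : t.le n A) : t.le n X := by
  obtain ⟨X', B', hX', hB', f, g, h, hT⟩ := t.exists_triangle X n (n + 1) rfl
  have hg : g = 0 := by
    have hpg : p ≫ g = 0 := zero_gen t _ n (n + 1) (by omega) hA hB'
    calc g = (r ≫ p) ≫ g := by rw [hrp, Category.id_comp]
    _ = r ≫ (p ≫ g) := by rw [Category.assoc]
    _ = 0 := by rw [hpg, Limits.comp_zero]
  obtain ⟨e, he⟩ := Pretriangulated.Triangle.yoneda_exact₃ _ hT (𝟙 B')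
    (by show g ≫ 𝟙 B' = 0; rw [hg]; simp)
  have he0 : e = 0 := zero_gen t e (n - 1) (n + 1) (by omega)
    (t.le_shift n 1 (n - 1) (by omega) X' hX') hB'
  have hB0 : IsZero B' := by
    rw [Limits.IsZero.iff_id_eq_zero, he, he0]
    exact Limits.comp_zero
  have : IsIso f := (Pretriangulated.Triangle.isZero₃_iff_isIso₁ _ hT).1 hB0
  exact (ObjectProperty.prop_iff_of_iso (t.le n) (asIso f)).1 hX'

lemma le_iff_orth (n : ℤ) (X : C) :
    t.le n X ↔ ∀ (Y : C), t.ge (n + 1) Y → ∀ (f : X ⟶ Y), f = 0 := by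
  constructor
  · intro hX Y hY f
    exact zero_gen t f n (n + 1) (by omega) hX hY
  · intro hX
    obtain ⟨X', B', hX', hB', f, g, h, hT⟩ := t.exists_triangle X n (n + 1) rfl
    obtain ⟨r, hr⟩ := Pretriangulated.Triangle.coyoneda_exact₂ _ hT (𝟙 X)
      (by exact (Category.id_comp g).trans (hX B' hB' g))
    exact le_of_retract t r f hr.symm n hX'

lemma le_ext {T : Triangle C} (hT : T ∈ distTriang C) (n : ℤ)
    (h₁ : t.le n T.obj₁) (h₃ : t.le n T.obj₃) : t.le n T.obj₂ := by
  rw [le_iff_orth]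
  intro Y hY φ
  have h0 : T.mor₁ ≫ φ = 0 := zero_gen t _ n (n + 1) (by omega) h₁ hY
  obtain ⟨ψ, hψ⟩ := Pretriangulated.Triangle.yoneda_exact₂ _ hT φ h0
  have hψ0 : ψ = 0 := zero_gen t ψ n (n + 1) (by omega) h₃ hY
  rw [hψ, hψ0]; simp

lemma ge_of_retract {Y A : C} (s : Y ⟶ A) (p : A ⟶ Y) (hsp : s ≫ p = 𝟙 Y)
    (n : ℤ) (hA : t.ge n A) : t.ge n Y := by
  obtain ⟨A', B', hA', hB', f, g, h, hT⟩ := t.exists_triangle Y (n - 1) n (by omega)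
  have hf : f = 0 := by
    have hfs : f ≫ s = 0 := zero_gen t _ (n - 1) n (by omega) hA' hA
    calc f = f ≫ (s ≫ p) := by rw [hsp, Category.comp_id]
    _ = (f ≫ s) ≫ p := by rw [Category.assoc]
    _ = 0 := by rw [hfs]; simp
  have hA0 : IsZero A' := by
    obtain ⟨ψ, hψ⟩ := Pretriangulated.Triangle.coyoneda_exact₁ _ hT (𝟙 (A'⟦(1:ℤ)⟧))
      (by show 𝟙 (A'⟦(1:ℤ)⟧) ≫ (shiftFunctor C (1:ℤ)).map f = 0
          rw [hf, CategoryTheory.Functor.map_zero]; simp)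
    have hψ0 : ψ = 0 := zero_gen t ψ (n - 2) n (by omega)
      (t.le_shift (n - 1) 1 (n - 2) (by omega) A' hA') hB'
    have hz : IsZero (A'⟦(1:ℤ)⟧) := by
      rw [Limits.IsZero.iff_id_eq_zero, hψ, hψ0]
      exact Limits.zero_comp
    rw [Limits.IsZero.iff_id_eq_zero]
    apply (shiftFunctor C (1:ℤ)).map_injective
    rw [CategoryTheory.Functor.map_id, CategoryTheory.Functor.map_zero]
    exact (Limits.IsZero.iff_id_eq_zero _).1 hz
  have : IsIso g := (Pretriangulated.Triangle.isZero₁_iff_isIso₂ _ hT).1 hA0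
  exact (ObjectProperty.prop_iff_of_iso (t.ge n) (asIso g)).2 hB'

lemma ge_iff_orth (n : ℤ) (Y : C) :
    t.ge n Y ↔ ∀ (X : C), t.le (n - 1) X → ∀ (f : X ⟶ Y), f = 0 := by
  constructor
  · intro hY X hX f
    exact zero_gen t f (n - 1) n (by omega) hX hY
  · intro hY
    obtain ⟨A', B', hA', hB', f, g, h, hT⟩ := t.exists_triangle Y (n - 1) n (by omega)
    obtain ⟨p, hp⟩ := Pretriangulated.Triangle.yoneda_exact₂ _ hT (𝟙 Y)
      (by show f ≫ 𝟙 Y = 0; rw [hY A' hA' f]; simp)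
    exact ge_of_retract t g p hp.symm n hB'

lemma ge_ext {T : Triangle C} (hT : T ∈ distTriang C) (n : ℤ)
    (h₁ : t.ge n T.obj₁) (h₃ : t.ge n T.obj₃) : t.ge n T.obj₂ := by
  rw [ge_iff_orth]
  intro X hX φ
  have h0 : φ ≫ T.mor₂ = 0 := zero_gen t _ (n - 1) n (by omega) hX h₃
  obtain ⟨ψ, hψ⟩ := Pretriangulated.Triangle.coyoneda_exact₂ _ hT φ h0
  have hψ0 : ψ = 0 := zero_gen t ψ (n - 1) n (by omega) hX h₁
  rw [hψ, hψ0]; simp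

end TAux


/-- Let `T` be a triangulated category with a t-structure and let `I` be an object of the
heart. Then `I` is an injective object of the heart if and only if `T(Z[-1], I) ≅ 0` for
every `Z` in the heart. -/
theorem stmt17 {C : Type*} [Category C]
    [Preadditive C] [HasZeroObject C] [HasShift C ℤ] [∀ n : ℤ, (shiftFunctor C n).Additive]
    [Pretriangulated C]
    (t : TStructure C) (I : Heart t) :
    Injective I ↔
      ∀ (Z : Heart t) (f : ((heartι t).obj Z)⟦(-1 : ℤ)⟧ ⟶ (heartι t).obj I), f = 0 := by
  constructor
  · -- Injective → Hom(Z[-1], I) = 0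
    intro hInj Z f
    obtain ⟨W, g, h, hT⟩ := Pretriangulated.distinguished_cocone_triangle f
    set T : Pretriangulated.Triangle C := Pretriangulated.Triangle.mk f g h with hTdef
    have hTrot := Pretriangulated.rot_of_distTriang T hT
    -- the third object of the rotated triangle is isomorphic to Z
    have e : ((Z.obj⟦(-1:ℤ)⟧)⟦(1:ℤ)⟧ : C) ≅ Z.obj := (shiftEquiv C (1:ℤ)).counitIso.app Z.obj
    have hle3 : t.le 0 ((Z.obj⟦(-1:ℤ)⟧)⟦(1:ℤ)⟧) := (ObjectProperty.prop_iff_of_iso (t.le 0) e).2 Z.property.1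
    have hge3 : t.ge 0 ((Z.obj⟦(-1:ℤ)⟧)⟦(1:ℤ)⟧) := (ObjectProperty.prop_iff_of_iso (t.ge 0) e).2 Z.property.2
    have hWle : t.le 0 W := TAux.le_ext t hTrot 0 I.property.1 hle3
    have hWge : t.ge 0 W := TAux.ge_ext t hTrot 0 I.property.2 hge3
    let W' : Heart t := ⟨W, hWle, hWge⟩
    let g' : I ⟶ W' := ObjectProperty.homMk g
    haveI : Mono g' := by
      refine ⟨fun {K} a b hab => ?_⟩
      have hab2 : a.hom ≫ g = b.hom ≫ g := congrArg (fun x => x.hom) hab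
      have hab' : (a.hom - b.hom) ≫ T.mor₂ = 0 := by
        show (a.hom - b.hom) ≫ g = 0
        rw [Preadditive.sub_comp, hab2, sub_self]
      obtain ⟨k', hk'⟩ := Pretriangulated.Triangle.coyoneda_exact₂ _ hT _ hab'
      have hk0 : k' = 0 := TAux.zero_gen t k' 0 1 (by omega) K.property.1
        (t.ge_shift 0 (-1) 1 (by omega) Z.obj Z.property.2)
      have hs : a.hom - b.hom = 0 := by
        rw [hk', hk0]; exact Limits.zero_comp
      exact ObjectProperty.hom_ext _ (sub_eq_zero.1 hs)
    haveI := hInj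
    obtain ⟨r, hr⟩ := Injective.factors (𝟙 I) g'
    have hr' : g ≫ r.hom = 𝟙 I.obj := congrArg (fun x => x.hom) hr
    have h12 : f ≫ g = 0 := Pretriangulated.comp_distTriang_mor_zero₁₂ T hT
    calc f = f ≫ 𝟙 I.obj := (Category.comp_id f).symm
    _ = f ≫ (g ≫ r.hom) := by rw [hr']
    _ = (f ≫ g) ≫ r.hom := by rw [Category.assoc]
    _ = 0 := by rw [h12]; simp
  · -- Hom(Z[-1], I) = 0 → Injective
    intro hI
    constructor
    intro A B g i hmono
    obtain ⟨W, p, w, hT⟩ := Pretriangulated.distinguished_cocone_triangle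
      i.hom
    set T : Pretriangulated.Triangle C :=
      Pretriangulated.Triangle.mk i.hom p w with hTdef
    have hTrot := Pretriangulated.rot_of_distTriang T hT
    have hWle : t.le 0 W := TAux.le_ext t hTrot 0 B.property.1
      (t.le_monotone (by omega : (-1:ℤ) ≤ 0) _ (t.le_shift 0 1 (-1) (by omega) A.obj A.property.1))
    have hWge : t.ge (-1) W := TAux.ge_ext t hTrot (-1)
      (t.ge_antitone (by omega : (-1:ℤ) ≤ 0) _ B.property.2)
      (t.ge_shift 0 1 (-1) (by omega) A.obj A.property.2)
    have hT' := Pretriangulated.inv_rot_of_distTriang T hT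
    set T' := T.invRotate with hT'def
    have huv : T'.mor₁ ≫ T'.mor₂ = 0 := Pretriangulated.comp_distTriang_mor_zero₁₂ T' hT'
    have hXle : t.le 1 (W⟦(-1:ℤ)⟧) := t.le_shift 0 (-1) 1 (by omega) W hWle
    have hXge : t.ge 0 (W⟦(-1:ℤ)⟧) := t.ge_shift (-1) (-1) 0 (by omega) W hWge
    obtain ⟨K, G, hK, hG, a, b, c, hT₂⟩ := t.exists_triangle (W⟦(-1:ℤ)⟧) 0 1 rfl
    set T₂ : Pretriangulated.Triangle C := Pretriangulated.Triangle.mk a b c with hT₂def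
    have hKge : t.ge 0 K := TAux.ge_ext t (Pretriangulated.inv_rot_of_distTriang T₂ hT₂) 0
      (t.ge_antitone (by omega : (0:ℤ) ≤ 2) _ (t.ge_shift 1 (-1) 2 (by omega) G hG)) hXge
    have hGle : t.le 1 G := TAux.le_ext t (Pretriangulated.rot_of_distTriang T₂ hT₂) 1 hXle
      (t.le_monotone (by omega : (-1:ℤ) ≤ 1) _ (t.le_shift 0 1 (-1) (by omega) K hK))
    let Z' : Heart t := ⟨G⟦(1:ℤ)⟧, t.le_shift 1 1 0 (by omega) G hGle,
      t.ge_shift 1 1 0 (by omega) G hG⟩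
    have hGzero : ∀ (q : G ⟶ I.obj), q = 0 := by
      intro q
      have ε : G ≅ ((G⟦(1:ℤ)⟧)⟦(-1:ℤ)⟧ : C) := (shiftEquiv C (1:ℤ)).unitIso.app G
      have hq : (ε.inv ≫ q : ((G⟦(1:ℤ)⟧)⟦(-1:ℤ)⟧ : C) ⟶ I.obj) = 0 := hI Z' (ε.inv ≫ q)
      calc q = ε.hom ≫ (ε.inv ≫ q) := by rw [Iso.hom_inv_id_assoc]
      _ = 0 := by rw [hq, Limits.comp_zero]
    -- a ≫ u : K ⟶ A is zero since i is a mono in the heart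
    let K' : Heart t := ⟨K, hK, hKge⟩
    obtain ⟨k0, hk0eq⟩ : ∃ k0 : K ⟶ A.obj, a ≫ T'.mor₁ = k0 := ⟨a ≫ T'.mor₁, rfl⟩
    have hk0 : k0 = (0 : K ⟶ A.obj) := by
      refine congrArg (fun x => x.hom) (hmono.right_cancellation (Z := K') (ObjectProperty.homMk k0) 0 ?_)
      ext
      show (k0 ≫ T'.mor₂ : K ⟶ B.obj) = ((0 : K ⟶ A.obj) ≫ T'.mor₂ : K ⟶ B.obj)
      rw [← hk0eq]; exact (Category.assoc _ _ _).trans ((congrArg (fun x => a ≫ x) huv).trans (Limits.comp_zero.trans Limits.zero_comp.symm))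
    obtain ⟨g0, hg0eq⟩ : ∃ g0 : A.obj ⟶ I.obj, g0 = g.hom := ⟨g.hom, rfl⟩
    have hδK : T₂.mor₁ ≫ (T'.mor₁ ≫ g0) = 0 := by
      show a ≫ T'.mor₁ ≫ g0 = 0
      exact (Category.assoc _ _ _).symm.trans ((congrArg (fun x => x ≫ g0) (hk0eq.trans hk0)).trans Limits.zero_comp)
    obtain ⟨e', he'⟩ := Pretriangulated.Triangle.yoneda_exact₂ _ hT₂
      (T'.mor₁ ≫ g0) hδK
    have hδ : T'.mor₁ ≫ g0 = 0 := by
      exact he'.trans ((congrArg (fun x => T₂.mor₂ ≫ x) (hGzero e')).trans Limits.comp_zero)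
    obtain ⟨h, hh⟩ := Pretriangulated.Triangle.yoneda_exact₂ _ hT' g0 hδ
    rw [hg0eq] at hh
    exact ⟨ObjectProperty.homMk h, by ext; exact hh.symm⟩
end

section
/- Let T be a triangulated category with a non-degenerate t-structure which has derived injectives, and assume the heart T^♥ has a small separating family 𝒢 of objects (i.e. the functors Hom(G, −), G ∈ 𝒢, are jointly faithful). Then for any object E ∈ T the following are equivalent: (1) E is a derived injective; (2) E ∈ T_{≥0} and T(Z[-1], E) ≅ 0 for every Z ∈ T_{≥0}; (3) E ∈ T_{≥0} and T(Z[-n], E) ≅ 0 for every Z ∈ T^♥ and every n ≥ 1; (4) E ∈ T_{≥0}, H^0(E) is an injective object of T^♥, and T(G[-n], E) ≅ 0 for every G ∈ 𝒢 and every n ≥ 1. -/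
open CategoryTheory Limits Pretriangulated Triangulated Opposite

namespace DGP

universe v u

variable {C : Type u} [Category.{v} C] [Preadditive C] [HasZeroObject C] [HasShift C ℤ]
  [∀ n : ℤ, (shiftFunctor C n).Additive] [Pretriangulated C]

variable {t : TStructure C}

section Helpers

open ZeroObject

variable (d : TruncData t)

lemma ι_cancel {n : ℤ} {X Y : C} (hX : t.le n X) {f g : X ⟶ (d.τle n).obj Y}
    (h : f ≫ (d.ι n).app Y = g ≫ (d.ι n).app Y) : f = g :=
  (d.le_univ n X Y hX).injective h

lemma ι_lift {n : ℤ} {X Y : C} (hX : t.le n X) (g : X ⟶ Y) :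
    ∃ f : X ⟶ (d.τle n).obj Y, f ≫ (d.ι n).app Y = g :=
  (d.le_univ n X Y hX).surjective g

lemma π_cancel {n : ℤ} {X Y : C} (hY : t.ge n Y) {f g : (d.τge n).obj X ⟶ Y}
    (h : (d.π n).app X ≫ f = (d.π n).app X ≫ g) : f = g :=
  (d.ge_univ n X Y hY).injective h

lemma π_desc {n : ℤ} {X Y : C} (hY : t.ge n Y) (g : X ⟶ Y) :
    ∃ f : (d.τge n).obj X ⟶ Y, (d.π n).app X ≫ f = g :=
  (d.ge_univ n X Y hY).surjective g

lemma isIso_ι {n : ℤ} {X : C} (hX : t.le n X) : IsIso ((d.ι n).app X) := by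
  obtain ⟨j, hj⟩ := ι_lift d hX (𝟙 X)
  refine ⟨j, ?_, hj⟩
  apply ι_cancel d (d.τleLE n X)
  rw [Category.assoc, hj]
  simp

lemma isIso_π {n : ℤ} {X : C} (hX : t.ge n X) : IsIso ((d.π n).app X) := by
  obtain ⟨j, hj⟩ := π_desc d hX (𝟙 X)
  refine ⟨j, hj, ?_⟩
  apply π_cancel d (d.τgeGE n X)
  rw [← Category.assoc, hj]
  simp

lemma isZero_τle {n : ℤ} {Y : C} (h : ∀ (W : C), t.le n W → ∀ f : W ⟶ Y, f = 0) :
    IsZero ((d.τle n).obj Y) := by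
  rw [IsZero.iff_id_eq_zero]
  apply ι_cancel d (d.τleLE n Y)
  rw [Category.id_comp, zero_comp]
  exact h _ (d.τleLE n Y) _

lemma isZero_τge {n : ℤ} {Y : C} (h : ∀ f : Y ⟶ (d.τge n).obj Y, f = 0) :
    IsZero ((d.τge n).obj Y) := by
  rw [IsZero.iff_id_eq_zero]
  apply π_cancel d (d.τgeGE n Y)
  rw [Category.comp_id, comp_zero]
  exact h _

lemma hom_zero {a b : ℤ} (hab : a < b) {X Y : C} (hX : t.le a X) (hY : t.ge b Y)
    (f : X ⟶ Y) : f = 0 := by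
  apply (shiftFunctor C a).map_injective
  rw [Functor.map_zero]
  exact t.zero' (f⟦a⟧') (t.le_shift a a 0 (by omega) X hX)
    (t.ge_antitone (by omega : (1:ℤ) ≤ b - a) _ (t.ge_shift b a (b - a) (by omega) Y hY))

lemma ge_of_orth (d : TruncData t) {n : ℤ} {X : C} (h : ∀ W, t.le (n-1) W → ∀ f : W ⟶ X, f = 0) :
    t.ge n X := by
  have hz : IsZero ((d.τle (n-1)).obj X) := isZero_τle d (fun W hW f => h W hW f)
  have hiso : IsIso ((Triangle.mk ((d.ι (n-1)).app X) ((d.π (n-1+1)).app X) (d.δ (n-1) X)).mor₂) :=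
    (Triangle.isZero₁_iff_isIso₂ _ (d.tri (n-1) X)).1 hz
  haveI : IsIso ((d.π (n-1+1)).app X) := hiso
  have hge : t.ge n ((d.τge (n-1+1)).obj X) :=
    t.ge_antitone (le_of_eq (by omega)) _ (d.τgeGE (n-1+1) X)
  exact (ObjectProperty.prop_iff_of_iso (t.ge n) (asIso ((d.π (n-1+1)).app X))).2 hge

lemma le_of_orth (d : TruncData t) {n : ℤ} {X : C} (h : ∀ V, t.ge (n+1) V → ∀ f : X ⟶ V, f = 0) :
    t.le n X := by
  have hz : IsZero ((d.τge (n+1)).obj X) := isZero_τge d (fun f => h _ (d.τgeGE _ _) f)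
  have hiso : IsIso ((Triangle.mk ((d.ι n).app X) ((d.π (n+1)).app X) (d.δ n X)).mor₁) :=
    (Triangle.isZero₃_iff_isIso₁ _ (d.tri n X)).1 hz
  haveI : IsIso ((d.ι n).app X) := hiso
  exact (ObjectProperty.prop_iff_of_iso (t.le n) (asIso ((d.ι n).app X)).symm).2 (d.τleLE n X)

lemma le_ext (d : TruncData t) {T : Triangle C} (hT : T ∈ distTriang C) (h₁ : t.le 0 T.obj₁)
    (h₃ : t.le 0 T.obj₃) : t.le 0 T.obj₂ := by
  apply le_of_orth d
  intro V hV f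
  obtain ⟨g, hg⟩ := Triangle.yoneda_exact₂ T hT f
    (hom_zero (by omega : (0:ℤ) < 1) h₁ hV _)
  rw [hg, hom_zero (by omega : (0:ℤ) < 1) h₃ hV g, comp_zero]

lemma ge_ext (d : TruncData t) {T : Triangle C} (hT : T ∈ distTriang C) (h₁ : t.ge 0 T.obj₁)
    (h₃ : t.ge 0 T.obj₃) : t.ge 0 T.obj₂ := by
  apply ge_of_orth d
  intro W hW f
  rw [show (0:ℤ)-1 = -1 by omega] at hW
  obtain ⟨g, hg⟩ := Triangle.coyoneda_exact₂ T hT f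
    (hom_zero (by omega : (-1:ℤ) < 0) hW h₃ _)
  rw [hg, hom_zero (by omega : (-1:ℤ) < 0) hW h₁ g, zero_comp]

lemma ge_τle {n : ℤ} {X : C} (hX : t.ge n X) : t.ge n ((d.τle n).obj X) := by
  apply ge_of_orth d
  intro W hW f
  apply ι_cancel d (t.le_monotone (by omega : n-1 ≤ n) _ hW)
  rw [zero_comp]
  exact hom_zero (by omega : n-1 < n) hW hX _

lemma heart_isZero {X : Heart t} (h : IsZero X.obj) : IsZero X := by
  rw [IsZero.iff_id_eq_zero] at h ⊢
  ext; exact h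

lemma isZero_H0_of_ge_one {X : C} (hX : t.ge 1 X) : IsZero ((H0 d).obj X) := by
  apply heart_isZero
  have h1 : IsZero ((d.τle 0).obj X) :=
    isZero_τle d (fun W hW f => hom_zero (by omega : (0:ℤ) < 1) hW hX f)
  exact isZero_τge d (fun f => h1.eq_of_src f 0)

lemma isZero_H0_of_le_neg_one {X : C} (hX : t.le (-1) X) : IsZero ((H0 d).obj X) := by
  apply heart_isZero
  have hX0 : t.le 0 X := t.le_monotone (by omega : (-1:ℤ) ≤ 0) _ hX
  haveI := isIso_ι d hX0
  have h1 : t.le (-1) ((d.τle 0).obj X) :=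
    (ObjectProperty.prop_iff_of_iso (t.le (-1)) (asIso ((d.ι 0).app X))).2 hX
  exact isZero_τge d (fun f => hom_zero (by omega : (-1:ℤ) < 0) h1 (d.τgeGE 0 _) f)

lemma isZero_H0_zeroObj {Y : C} (hY : IsZero Y) : IsZero ((H0 d).obj Y) := by
  apply heart_isZero
  have h1 : IsZero ((d.τle 0).obj Y) := isZero_τle d (fun W hW f => hY.eq_of_tgt f 0)
  exact isZero_τge d (fun f => h1.eq_of_src f 0)

lemma H0_map_zero {A E : C} : (H0 d).map (0 : A ⟶ E) = 0 := by
  have h0 : IsZero ((H0 d).obj (0 : C)) := isZero_H0_zeroObj d (isZero_zero C)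
  have : (0 : A ⟶ E) = (0 : A ⟶ (0:C)) ≫ (0 : (0:C) ⟶ E) := by simp
  rw [this, Functor.map_comp, h0.eq_of_tgt ((H0 d).map (0 : A ⟶ (0:C))) 0, zero_comp]

lemma H0_obj_obj (X : C) : ((H0 d).obj X).obj = (d.τge 0).obj ((d.τle 0).obj X) := rfl

/-- `h.hom`, with its source and target written through the truncation functors. -/
def pureHom {A E : C} (h : (H0 d).obj A ⟶ (H0 d).obj E) :
    (d.τge 0).obj ((d.τle 0).obj A) ⟶ (d.τge 0).obj ((d.τle 0).obj E) :=
  h.hom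

/-- The inverse of `g ↦ H⁰(g)` for `A ∈ T_{≤0}`, `E ∈ T_{≥0}`. -/
noncomputable def fromH0 {A E : C} (hA : t.le 0 A) (hE : t.ge 0 E)
    (h : (H0 d).obj A ⟶ (H0 d).obj E) : A ⟶ E :=
  letI := isIso_ι d hA
  letI := isIso_π d (ge_τle d hE)
  inv ((d.ι 0).app A) ≫ (d.π 0).app ((d.τle 0).obj A) ≫ pureHom d h ≫
    inv ((d.π 0).app ((d.τle 0).obj E)) ≫ (d.ι 0).app E

lemma fromH0_toH0 {A E : C} (hA : t.le 0 A) (hE : t.ge 0 E) (g : A ⟶ E) :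
    fromH0 d hA hE ((H0 d).map g) = g := by
  letI := isIso_ι d hA
  letI := isIso_π d (ge_τle d hE)
  have hmap : pureHom d ((H0 d).map g) = (d.τge 0).map ((d.τle 0).map g) := rfl
  have hπ : (d.π 0).app ((d.τle 0).obj A) ≫ (d.τge 0).map ((d.τle 0).map g)
      = (d.τle 0).map g ≫ (d.π 0).app ((d.τle 0).obj E) := by
    simpa using ((d.π 0).naturality ((d.τle 0).map g)).symm
  have hι : (d.τle 0).map g ≫ (d.ι 0).app E = (d.ι 0).app A ≫ g := by
    simpa using (d.ι 0).naturality g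
  rw [fromH0, hmap]
  slice_lhs 2 3 => rw [hπ]
  simp [hι]

lemma toH0_fromH0 {A E : C} (hA : t.le 0 A) (hE : t.ge 0 E)
    (h : (H0 d).obj A ⟶ (H0 d).obj E) :
    (H0 d).map (fromH0 d hA hE h) = h := by
  letI := isIso_ι d hA
  letI := isIso_π d (ge_τle d hE)
  apply (heartι t).map_injective
  have hmap : (heartι t).map ((H0 d).map (fromH0 d hA hE h))
      = (d.τge 0).map ((d.τle 0).map (fromH0 d hA hE h)) := rfl
  rw [hmap]
  apply π_cancel d (d.τgeGE 0 ((d.τle 0).obj E))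
  have hπ : (d.π 0).app ((d.τle 0).obj A) ≫ (d.τge 0).map ((d.τle 0).map (fromH0 d hA hE h))
      = (d.τle 0).map (fromH0 d hA hE h) ≫ (d.π 0).app ((d.τle 0).obj E) := by
    simpa using ((d.π 0).naturality ((d.τle 0).map (fromH0 d hA hE h))).symm
  rw [hπ]
  have hkey : (d.τle 0).map (fromH0 d hA hE h)
      = (d.π 0).app ((d.τle 0).obj A) ≫ pureHom d h
        ≫ inv ((d.π 0).app ((d.τle 0).obj E)) := by
    apply ι_cancel d (d.τleLE 0 A)
    have hι : (d.τle 0).map (fromH0 d hA hE h) ≫ (d.ι 0).app E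
        = (d.ι 0).app A ≫ fromH0 d hA hE h := by
      simpa using (d.ι 0).naturality (fromH0 d hA hE h)
    rw [hι, fromH0]
    simp
  rw [hkey]
  simp only [Category.assoc, IsIso.inv_hom_id, Category.comp_id]
  rfl

lemma toH0_bij {A E : C} (hA : t.le 0 A) (hE : t.ge 0 E) :
    Function.Bijective (fun g : A ⟶ E => (H0 d).map g) :=
  ⟨fun g₁ g₂ hg => by
    rw [← fromH0_toH0 d hA hE g₁, ← fromH0_toH0 d hA hE g₂]
    exact congrArg _ hg,
   fun h => ⟨fromH0 d hA hE h, toH0_fromH0 d hA hE h⟩⟩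

/-- The comparison map `H⁰(E) ⟶ E` for `E ∈ T_{≥0}`. -/
noncomputable def wMap {E : C} (hE : t.ge 0 E) : ((H0 d).obj E).obj ⟶ E :=
  letI := isIso_π d (ge_τle d hE)
  (inv ((d.π 0).app ((d.τle 0).obj E)) : (d.τge 0).obj ((d.τle 0).obj E) ⟶ _) ≫ (d.ι 0).app E

lemma wMap_bij {V E : C} (hV : t.le 0 V) (hE : t.ge 0 E) :
    Function.Bijective (fun κ : V ⟶ ((H0 d).obj E).obj => κ ≫ wMap d hE) := by
  letI := isIso_π d (ge_τle d hE)
  have h1 : Function.Bijective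
      (fun κ : V ⟶ ((H0 d).obj E).obj => κ ≫ (inv ((d.π 0).app ((d.τle 0).obj E)) : (d.τge 0).obj ((d.τle 0).obj E) ⟶ _)) := by
    constructor
    · intro a b hab
      dsimp only [H0_obj_obj] at a b hab ⊢
      simpa using (congrArg (fun x => x ≫ (d.π 0).app ((d.τle 0).obj E)) hab)
    · intro y
      exact ⟨y ≫ (d.π 0).app ((d.τle 0).obj E), by dsimp only [H0_obj_obj]; simp⟩
  have h2 := d.le_univ 0 V E hV
  have heq : (fun κ : V ⟶ ((H0 d).obj E).obj => κ ≫ wMap d hE)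
      = (fun f : V ⟶ (d.τle 0).obj E => f ≫ (d.ι 0).app E)
        ∘ (fun κ => κ ≫ (inv ((d.π 0).app ((d.τle 0).obj E)) : (d.τge 0).obj ((d.τle 0).obj E) ⟶ _)) := by
    funext g
    simp only [wMap]
    exact (Category.assoc _ _ _).symm
  rw [heq]
  exact h2.comp h1

lemma hom_eq_zero_of_isZero_H0 {L : C} {I : Heart t}
    (α : yoneda.obj L ≅ (H0 d).op ⋙ yoneda.obj I)
    {W : C} (hW : IsZero ((H0 d).obj W)) (f : W ⟶ L) : f = 0 := by
  have e := (α.app (op W)).toEquiv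
  have : e f = e (0 : W ⟶ L) := hW.eq_of_src _ _
  exact e.injective this

lemma ge_of_derInj {L : C} {I : Heart t}
    (α : yoneda.obj L ≅ (H0 d).op ⋙ yoneda.obj I) : t.ge 0 L := by
  apply ge_of_orth d
  intro W hW f
  rw [show (0:ℤ)-1 = -1 by omega] at hW
  exact hom_eq_zero_of_isZero_H0 d α (isZero_H0_of_le_neg_one d hW) f

lemma shift_vanish_of_derInj {L : C} {I : Heart t}
    (α : yoneda.obj L ≅ (H0 d).op ⋙ yoneda.obj I)
    (Z : C) (hZ : t.ge 0 Z) (f : Z⟦(-1:ℤ)⟧ ⟶ L) : f = 0 :=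
  hom_eq_zero_of_isZero_H0 d α
    (isZero_H0_of_ge_one d (t.ge_shift 0 (-1) 1 (by omega) Z hZ)) f

lemma vanish_shift_ge {E : C}
    (hE2 : ∀ Z, t.ge 0 Z → ∀ f : Z⟦(-1:ℤ)⟧ ⟶ E, f = 0)
    (Z : C) (hZ : t.ge 0 Z) (n : ℤ) (hn : 1 ≤ n) (f : Z⟦(-n:ℤ)⟧ ⟶ E) : f = 0 := by
  have hZ' : t.ge 0 (Z⟦(1 - n : ℤ)⟧) :=
    t.ge_antitone (by omega : (0:ℤ) ≤ n - 1) _ (t.ge_shift 0 (1-n) (n-1) (by omega) Z hZ)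
  have e := (shiftFunctorAdd' C (1-n) (-1) (-n) (by omega)).app Z
  have h0 : e.inv ≫ f = 0 := hE2 _ hZ' (e.inv ≫ f)
  calc f = e.hom ≫ (e.inv ≫ f) := by rw [Iso.hom_inv_id_assoc]
  _ = 0 := by rw [h0, comp_zero]

lemma shift_neg_one_cancel {A W : C} (g : W ⟶ A⟦(1:ℤ)⟧)
    (h : (g⟦(-1:ℤ)⟧') ≫ (shiftFunctorCompIsoId C (1:ℤ) (-1:ℤ) (by omega)).hom.app A = 0) :
    g = 0 := by
  apply (shiftFunctor C (-1:ℤ)).map_injective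
  rw [Functor.map_zero]
  rw [← cancel_mono ((shiftFunctorCompIsoId C (1:ℤ) (-1:ℤ) (by omega)).hom.app A)]
  rw [h, zero_comp]

lemma shift_down_comp {A B W : C} (f : A ⟶ B) (g : W ⟶ A⟦(1:ℤ)⟧)
    (hgf : g ≫ f⟦(1:ℤ)⟧' = 0) :
    ((g⟦(-1:ℤ)⟧') ≫ (shiftFunctorCompIsoId C (1:ℤ) (-1:ℤ) (by omega)).hom.app A) ≫ f = 0 := by
  have hnat := (shiftFunctorCompIsoId C (1:ℤ) (-1:ℤ) (by omega)).hom.naturality f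
  rw [Functor.id_map] at hnat
  rw [Category.assoc, ← hnat]
  have : g⟦(-1:ℤ)⟧' ≫ (shiftFunctor C (1:ℤ) ⋙ shiftFunctor C (-1:ℤ)).map f
      = (g ≫ f⟦(1:ℤ)⟧')⟦(-1:ℤ)⟧' := by
    rw [Functor.map_comp]
    rfl
  rw [← Category.assoc, this, hgf, Functor.map_zero, zero_comp]

lemma ge_succ_of_gen_vanish (d : TruncData t) {κ' : Type*} (G : κ' → Heart t)
    (hsep : ∀ (X Y : Heart t) (f g : X ⟶ Y),
      (∀ (k : κ') (h : G k ⟶ X), h ≫ f = h ≫ g) → f = g)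
    {X : C} (m : ℤ) (hm : 0 ≤ m) (hX : t.ge m X)
    (hv : ∀ k (x : ((G k).obj)⟦(-m:ℤ)⟧ ⟶ X), x = 0) : t.ge (m+1) X := by
  apply ge_of_orth d
  intro W hW f
  rw [show m+1-1 = m by omega] at hW
  set V := (d.τle m).obj X with hV
  have hVle : t.le m V := d.τleLE m X
  have hVge : t.ge m V := ge_τle d hX
  have hV0le : t.le 0 (V⟦m⟧) := t.le_shift m m 0 (by omega) V hVle
  have hV0ge : t.ge 0 (V⟦m⟧) := t.ge_shift m m 0 (by omega) V hVge
  have hzero : ∀ k (h : (G k).obj ⟶ V⟦m⟧), h = 0 := by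
    intro k h
    have hGle : t.le m (((G k).obj)⟦(-m:ℤ)⟧) :=
      t.le_shift 0 (-m) m (by omega) _ (G k).property.1
    have h' : (h⟦(-m:ℤ)⟧') ≫ (shiftFunctorCompIsoId C m (-m) (by omega)).hom.app V = 0 := by
      apply ι_cancel d hGle
      rw [zero_comp]
      exact hv k _
    have h'' : h⟦(-m:ℤ)⟧' = 0 := by
      rw [← cancel_mono ((shiftFunctorCompIsoId C m (-m) (by omega)).hom.app V)]
      rw [h', zero_comp]
    exact (shiftFunctor C (-m:ℤ)).map_injective (by rw [h'', Functor.map_zero])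
  have hVm : IsZero (V⟦m⟧) := by
    rw [IsZero.iff_id_eq_zero]
    have hs := hsep ⟨V⟦m⟧, hV0le, hV0ge⟩ ⟨V⟦m⟧, hV0le, hV0ge⟩ (𝟙 _) 0
      (fun k h => by rw [Category.comp_id, comp_zero]; ext; exact hzero k h.hom)
    have hs' := congrArg InducedCategory.Hom.hom hs
    exact hs'
  obtain ⟨f₁, hf₁⟩ := ι_lift d hW f
  have hf₁0 : f₁ = 0 := by
    apply (shiftFunctor C m).map_injective
    rw [Functor.map_zero]
    exact hVm.eq_of_tgt _ _
  rw [← hf₁, hf₁0, zero_comp]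

end Helpers

end DGP

open DGP

/-- Let `T` be a triangulated category with a non-degenerate t-structure which has derived
injectives, and assume the heart has a small separating family `G : κ → T^♥` (the functors
`Hom(G k, −)` are jointly faithful). Then for `E ∈ T` the following are equivalent:
(1) `E` is a derived injective;
(2) `E ∈ T_{≥0}` and `T(Z[-1], E) ≅ 0` for every `Z ∈ T_{≥0}`;
(3) `E ∈ T_{≥0}` and `T(Z[-n], E) ≅ 0` for every `Z ∈ T^♥` and every `n ≥ 1`;
(4) `E ∈ T_{≥0}`, `H^0(E)` is injective in `T^♥`, and `T(G k[-n], E) ≅ 0` for every `k`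
    and every `n ≥ 1`. -/
theorem stmt18 {C : Type u} [Category.{v} C]
    [Preadditive C] [HasZeroObject C] [HasShift C ℤ] [∀ n : ℤ, (shiftFunctor C n).Additive]
    [Pretriangulated C]
    (t : TStructure C) (d : TruncData t)
    (hnd : NonDegenerate d)
    (hdi : ∀ I : Heart t, Injective I →
      ∃ L : C, Nonempty (yoneda.obj L ≅ (H0 d).op ⋙ yoneda.obj I))
    (κ : Type v) (G : κ → Heart t)
    (hsep : ∀ (X Y : Heart t) (f g : X ⟶ Y),
      (∀ (k : κ) (h : G k ⟶ X), h ≫ f = h ≫ g) → f = g)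
    (E : C) :
    List.TFAE
      [ IsDerivedInjective d E,
        t.ge 0 E ∧ ∀ (Z : C), t.ge 0 Z → ∀ f : Z⟦(-1 : ℤ)⟧ ⟶ E, f = 0,
        t.ge 0 E ∧ ∀ (Z : Heart t) (n : ℤ), 1 ≤ n →
          ∀ f : ((heartι t).obj Z)⟦(-n : ℤ)⟧ ⟶ E, f = 0,
        t.ge 0 E ∧ Injective ((H0 d).obj E) ∧ ∀ (k : κ) (n : ℤ), 1 ≤ n →
          ∀ f : ((heartι t).obj (G k))⟦(-n : ℤ)⟧ ⟶ E, f = 0 ] := by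
  tfae_have 1 → 2 := by
    rintro ⟨I, hI, ⟨β⟩⟩
    exact ⟨ge_of_derInj d β, fun Z hZ f => shift_vanish_of_derInj d β Z hZ f⟩
  tfae_have 2 → 3 := by
    rintro ⟨hge, h2⟩
    exact ⟨hge, fun Z n hn f => vanish_shift_ge h2 ((heartι t).obj Z) Z.property.2 n hn f⟩
  tfae_have 3 → 4 := by
    rintro ⟨hge, h3⟩
    refine ⟨hge, ?_, fun k n hn f => h3 (G k) n hn f⟩
    constructor
    intro X Y g u hu
    haveI := hu
    obtain ⟨Q, q, δq, hT⟩ := Pretriangulated.distinguished_cocone_triangle ((heartι t).map u)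
    have hQle : t.le 0 Q := by
      apply le_ext d (rot_of_distTriang _ hT)
      · exact Y.property.1
      · exact t.le_monotone (by omega : (-1:ℤ) ≤ 0) _
          (t.le_shift 0 1 (-1) (by omega) X.obj X.property.1)
    have hQge : t.ge 0 Q := by
      apply ge_of_orth d
      intro W hW x
      rw [show (0:ℤ)-1 = -1 by omega] at hW
      have hW' : t.le 0 (W⟦(-1:ℤ)⟧) := t.le_shift (-1) (-1) 0 (by omega) W hW
      have hxδ : x ≫ δq = 0 := by
        apply shift_neg_one_cancel
        set y := ((x ≫ δq)⟦(-1:ℤ)⟧') ≫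
          (shiftFunctorCompIsoId C (1:ℤ) (-1:ℤ) (by omega)).hom.app X.obj with hy
        show y = 0
        have h1 : y ≫ (heartι t).map u = 0 := by
          rw [hy]
          apply shift_down_comp
          have hz := comp_distTriang_mor_zero₃₁ _ hT
          simp only [Triangle.mk_mor₁, Triangle.mk_mor₃] at hz
          rw [Category.assoc]; exact (congrArg (fun k => x ≫ k) hz).trans comp_zero
        obtain ⟨yh, hyh⟩ := π_desc d X.property.2 y
        have h2 : yh ≫ (heartι t).map u = 0 := by
          apply π_cancel d Y.property.2
          rw [← Category.assoc, hyh, h1, comp_zero]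
        have h3' : yh = 0 := by
          have hm : (show (⟨(d.τge 0).obj (W⟦(-1:ℤ)⟧), d.τge_LE 0 0 _ hW',
              d.τgeGE 0 _⟩ : Heart t) ⟶ X from ObjectProperty.homMk yh) ≫ u = 0 ≫ u := by
            rw [zero_comp]
            ext; exact h2
          exact congrArg InducedCategory.Hom.hom (hu.right_cancellation _ _ hm)
        rw [← hyh, h3', comp_zero]
      obtain ⟨w, hw⟩ := Triangle.coyoneda_exact₃ _ hT x hxδ
      rw [hw, hom_zero (by omega : (-1:ℤ) < 0) hW Y.property.2 w]; exact zero_comp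
    letI := isIso_π d (ge_τle d hge)
    have hobs : (Triangle.mk ((heartι t).map u) q δq).invRotate.mor₁ ≫
        ((heartι t).map g ≫ wMap d hge) = 0 :=
      h3 ⟨Q, hQle, hQge⟩ 1 le_rfl _
    obtain ⟨ψ', hψ'⟩ := Triangle.yoneda_exact₂ _ (inv_rot_of_distTriang _ hT)
      ((heartι t).map g ≫ wMap d hge) hobs
    obtain ⟨ψ, hψ⟩ := (wMap_bij d Y.property.1 hge).surjective ψ'
    refine ⟨ObjectProperty.homMk ψ, ?_⟩
    ext
    apply (wMap_bij d X.property.1 hge).injective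
    show ((heartι t).map (u ≫ ObjectProperty.homMk ψ)) ≫ wMap d hge = ((heartι t).map g) ≫ wMap d hge
    rw [Functor.map_comp, Category.assoc]
    rw [show (heartι t).map (ObjectProperty.homMk ψ) ≫ wMap d hge = ψ' from hψ]
    exact hψ'.symm
  tfae_have 4 → 1 := by
    rintro ⟨hge, hinj, hgen⟩
    obtain ⟨L, ⟨α⟩⟩ := hdi ((H0 d).obj E) hinj
    have hLge : t.ge 0 L := ge_of_derInj d α
    have hLv : ∀ (Z : C), t.ge 0 Z → ∀ n, 1 ≤ n → ∀ f : Z⟦(-n:ℤ)⟧ ⟶ L, f = 0 :=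
      fun Z hZ n hn f => vanish_shift_ge (shift_vanish_of_derInj d α) Z hZ n hn f
    set φ := α.inv.app (op E) (𝟙 ((H0 d).obj E)) with hφdef
    have hαφ : α.hom.app (op E) φ = 𝟙 ((H0 d).obj E) := by
      rw [hφdef]
      exact types_congr_hom (α.inv_hom_id_app (op E)) _
    have hφbij : ∀ (A : C), t.le 0 A → Function.Bijective (fun g : A ⟶ E => g ≫ φ) := by
      intro A hA
      have heq : ∀ g : A ⟶ E, α.hom.app (op A) (g ≫ φ) = (H0 d).map g := by
        intro g
        have hnat := types_congr_hom (α.hom.naturality g.op) φ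
        dsimp at hnat
        rw [hnat, hαφ, Category.comp_id]
      have hsplit : (fun g : A ⟶ E => g ≫ φ)
          = ((α.app (op A)).toEquiv.symm ∘ (fun g : A ⟶ E => (H0 d).map g)) := by
        funext g
        apply (α.app (op A)).toEquiv.injective
        rw [Function.comp_apply, Equiv.apply_symm_apply]
        exact heq g
      rw [hsplit]
      exact (Equiv.bijective _).comp (toH0_bij d hA hge)
    obtain ⟨Cφ, p, δ, hT⟩ := Pretriangulated.distinguished_cocone_triangle φ
    have hC0 : t.ge 0 Cφ := by
      apply ge_of_orth d
      intro W hW x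
      rw [show (0:ℤ)-1 = -1 by omega] at hW
      have hW' : t.le 0 (W⟦(-1:ℤ)⟧) := t.le_shift (-1) (-1) 0 (by omega) W hW
      have hxδ : x ≫ δ = 0 := by
        apply shift_neg_one_cancel
        set y := ((x ≫ δ)⟦(-1:ℤ)⟧') ≫
          (shiftFunctorCompIsoId C (1:ℤ) (-1:ℤ) (by omega)).hom.app E with hy
        show y = 0
        have h1 : y ≫ φ = 0 := by
          rw [hy]
          apply shift_down_comp
          have hz := comp_distTriang_mor_zero₃₁ _ hT
          simp only [Triangle.mk_mor₁, Triangle.mk_mor₃] at hz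
          rw [Category.assoc]; exact (congrArg (fun k => x ≫ k) hz).trans comp_zero
        apply (hφbij _ hW').injective
        show y ≫ φ = (0 : W⟦(-1:ℤ)⟧ ⟶ E) ≫ φ
        rw [h1, zero_comp]
      obtain ⟨w, hw⟩ := Triangle.coyoneda_exact₃ _ hT x hxδ
      rw [hw, hom_zero (by omega : (-1:ℤ) < 0) hW hLge w]; exact zero_comp
    have hgen' : ∀ (m : ℤ), 0 ≤ m → ∀ k (x : ((G k).obj)⟦(-m:ℤ)⟧ ⟶ Cφ), x = 0 := by
      intro m hm k x
      have hxδ : x ≫ δ = 0 := by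
        apply shift_neg_one_cancel
        set y := ((x ≫ δ)⟦(-1:ℤ)⟧') ≫
          (shiftFunctorCompIsoId C (1:ℤ) (-1:ℤ) (by omega)).hom.app E with hy
        show y = 0
        have e := (shiftFunctorAdd' C (-m) (-1:ℤ) (-(m+1)) (by omega)).app ((heartι t).obj (G k))
        have h0 : e.hom ≫ y = 0 := hgen k (m+1) (by omega) _
        calc y = e.inv ≫ (e.hom ≫ y) := by rw [Iso.inv_hom_id_assoc]
        _ = 0 := by rw [h0, comp_zero]
      obtain ⟨w, hw⟩ := Triangle.coyoneda_exact₃ _ hT x hxδ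
      rcases eq_or_lt_of_le hm with hm0 | hm1
      · have hle : t.le 0 (((G k).obj)⟦(-m:ℤ)⟧) :=
          t.le_shift 0 (-m) 0 (by omega) _ (G k).property.1
        obtain ⟨z, hz⟩ := (hφbij _ hle).surjective w
        rw [hw, ← hz]
        show (z ≫ φ) ≫ p = 0
        have hz12 := comp_distTriang_mor_zero₁₂ _ hT
        simp only [Triangle.mk_mor₁, Triangle.mk_mor₂] at hz12
        rw [Category.assoc]; exact (congrArg (fun k => z ≫ k) hz12).trans comp_zero
      · rw [hw, hLv ((G k).obj) (G k).property.2 m (by omega) w]; exact zero_comp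
    have hCge : ∀ m : ℤ, 0 ≤ m → t.ge m Cφ :=
      Int.le_induction hC0 (fun n hn ih =>
        ge_succ_of_gen_vanish d G hsep n hn ih (fun k x => hgen' n hn k x))
    have hCzero : IsZero Cφ := by
      apply hnd
      intro n
      have h1 : t.ge (n+1) Cφ := by
        rcases le_or_gt 0 (n+1) with h | h
        · exact hCge _ h
        · exact t.ge_antitone (by omega : n+1 ≤ 0) _ (hCge 0 le_rfl)
      exact isZero_H0_of_ge_one d (t.ge_shift (n+1) n 1 (by omega) _ h1)
    haveI : IsIso φ := (Triangle.isZero₃_iff_isIso₁ (Triangle.mk φ p δ) hT).1 hCzero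
    exact ⟨(H0 d).obj E, hinj, ⟨yoneda.mapIso (asIso φ) ≪≫ α⟩⟩
  tfae_finish
end
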